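/- arXiv:1106.0912 — 6 statements merged into one kernel-verified Lean document; each statement's English description precedes it below -/
import Mathlib

section
/- For every u ∈ C²((0,∞)) and every y ∈ (0,∞): (i) A*(Au)(y) = (Hu)(y), i.e. the Hamiltonian factorizes as H = A*A; (ii) the conjugate Hamiltonian satisfies A(A*u)(y) = −u''(y) − u'(y)/y + 2(1+Z(y))·u(y)/y² = −u''(y) − u'(y)/y + 4u(y)/(y²(1+y²)). -/
open MeasureTheory Real Set

noncomputable section

/-- `Z(y) = (1-y²)/(1+y²)`. -/
def Zfun (y : ℝ) : ℝ := (1 - y ^ 2) / (1 + y ^ 2)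

/-- `V(y) = (y⁴-6y²+1)/(1+y²)²`. -/
def Vfun (y : ℝ) : ℝ := (y ^ 4 - 6 * y ^ 2 + 1) / (1 + y ^ 2) ^ 2

/-- `Au = -u' + (Z/y) u`. -/
def Aop (u : ℝ → ℝ) (y : ℝ) : ℝ := -(deriv u y) + Zfun y / y * u y

/-- `A*u = u' + ((1+Z)/y) u`. -/
def Astar (u : ℝ → ℝ) (y : ℝ) : ℝ := deriv u y + (1 + Zfun y) / y * u y

/-- The linearized Hamiltonian `Hu = -u'' - u'/y + (V/y²) u`. -/
def Hop (u : ℝ → ℝ) (y : ℝ) : ℝ :=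
  -(deriv (deriv u) y) - deriv u y / y + Vfun y / y ^ 2 * u y

/-- Factorization of the Hamiltonian: `H = A*A`, and the conjugate Hamiltonian
`AA*u = -u'' - u'/y + 2(1+Z)u/y² = -u'' - u'/y + 4u/(y²(1+y²))`. -/
theorem hamiltonian_factorization (u : ℝ → ℝ)
    (hu : ContDiffOn ℝ 2 u (Set.Ioi 0)) :
    ∀ y : ℝ, 0 < y →
      (Astar (Aop u) y = Hop u y) ∧
      (Aop (Astar u) y
        = -(deriv (deriv u) y) - deriv u y / y + 2 * (1 + Zfun y) * u y / y ^ 2) ∧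
      (Aop (Astar u) y
        = -(deriv (deriv u) y) - deriv u y / y + 4 * u y / (y ^ 2 * (1 + y ^ 2))) := by

  intro y hy
  have hy0 : y ≠ 0 := ne_of_gt hy
  have h1y : (1 + y ^ 2) ≠ 0 := by positivity
  have hden0 : (1 + y ^ 2) * y ≠ 0 := mul_ne_zero h1y hy0
  -- differentiability facts
  have hmem : Set.Ioi (0:ℝ) ∈ nhds y := isOpen_Ioi.mem_nhds hy
  have hd1 : DifferentiableOn ℝ u (Set.Ioi 0) :=
    hu.differentiableOn (by norm_num)
  have hd2' : ContDiffOn ℝ 1 (deriv u) (Set.Ioi 0) :=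
    hu.deriv_of_isOpen isOpen_Ioi (by norm_num)
  have hd2 : DifferentiableOn ℝ (deriv u) (Set.Ioi 0) :=
    hd2'.differentiableOn (by norm_num)
  have du : HasDerivAt u (deriv u y) y :=
    ((hd1.differentiableAt hmem)).hasDerivAt
  have ddu : HasDerivAt (deriv u) (deriv (deriv u) y) y :=
    ((hd2.differentiableAt hmem)).hasDerivAt
  -- derivatives of the coefficient functions
  have hnum : HasDerivAt (fun t : ℝ => 1 - t ^ 2) (-(2 * y)) y := by
    simpa using (hasDerivAt_pow 2 y).const_sub 1
  have hg : HasDerivAt (fun t : ℝ => (1 + t ^ 2) * t)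
      (2 * y * y + (1 + y ^ 2)) y := by
    have h1 : HasDerivAt (fun t : ℝ => 1 + t ^ 2) (2 * y) y := by
      simpa using (hasDerivAt_pow 2 y).const_add 1
    exact (h1.mul (hasDerivAt_id' y)).congr_deriv (by ring)
  set a' : ℝ := (-(2 * y) * ((1 + y ^ 2) * y)
      - (1 - y ^ 2) * (2 * y * y + (1 + y ^ 2))) / ((1 + y ^ 2) * y) ^ 2 with ha'
  set b' : ℝ := (0 * ((1 + y ^ 2) * y)
      - 2 * (2 * y * y + (1 + y ^ 2))) / ((1 + y ^ 2) * y) ^ 2 with hb'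
  have ha : HasDerivAt (fun t : ℝ => (1 - t ^ 2) / ((1 + t ^ 2) * t)) a' y :=
    hnum.div hg hden0
  have hb : HasDerivAt (fun t : ℝ => 2 / ((1 + t ^ 2) * t)) b' y :=
    (hasDerivAt_const y (2:ℝ)).div hg hden0
  -- rewriting the operator functions
  have hAfun : Aop u = fun t => -(deriv u t) + (1 - t ^ 2) / ((1 + t ^ 2) * t) * u t := by
    funext t
    simp [Aop, Zfun, div_div]
  have hSfun : Astar u = fun t => deriv u t + 2 / ((1 + t ^ 2) * t) * u t := by
    funext t
    have h1t : (1 + t ^ 2) ≠ 0 := by positivity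
    have h : (1 + Zfun t) / t = 2 / ((1 + t ^ 2) * t) := by
      rcases eq_or_ne t 0 with rfl | ht
      · simp
      · rw [Zfun]
        field_simp
        ring
    simp [Astar, h]
  -- derivative of Aop u and Astar u at y
  have hAder : deriv (Aop u) y
      = -(deriv (deriv u) y) + (a' * u y
        + (1 - y ^ 2) / ((1 + y ^ 2) * y) * deriv u y) := by
    rw [hAfun]
    exact (ddu.neg.add (ha.mul du)).deriv
  have hSder : deriv (Astar u) y
      = deriv (deriv u) y + (b' * u y
        + 2 / ((1 + y ^ 2) * y) * deriv u y) := by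
    rw [hSfun]
    exact (ddu.add (hb.mul du)).deriv
  have hApt : Aop u y = -(deriv u y) + (1 - y ^ 2) / ((1 + y ^ 2) * y) * u y := by
    rw [hAfun]
  have hSpt : Astar u y = deriv u y + 2 / ((1 + y ^ 2) * y) * u y := by
    rw [hSfun]
  have hZy : (1 + Zfun y) / y = 2 / ((1 + y ^ 2) * y) := by
    rw [Zfun]; field_simp; ring
  have hZyd : Zfun y / y = (1 - y ^ 2) / ((1 + y ^ 2) * y) := by
    rw [Zfun, div_div]
  refine ⟨?_, ?_, ?_⟩
  · rw [Astar, hAder, hZy, hApt, Hop, Vfun, ha']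
    field_simp
    ring
  · rw [Aop, hSder, hZyd, hSpt, Zfun, hb']
    field_simp
    ring
  · rw [Aop, hSder, hZyd, hSpt, hb']
    field_simp
    ring
end
end

section
/- The function Γ(y) = Λφ(y)·∫₁^y dx/(x·Λφ(x)²) satisfies HΓ = 0 on (0,∞). Moreover there is a constant C > 0 such that |Γ(y) − y/4| ≤ C·(log y)/y for all y ≥ 2, and |Γ(y)| ≤ C/y for all 0 < y ≤ 1. -/
open MeasureTheory Real Set

noncomputable section

/-- `Λφ(y) = 2y/(1+y²)`. -/
def Lphi (y : ℝ) : ℝ := 2 * y / (1 + y ^ 2)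

/-- The second (singular) element of the kernel of `H`:
`Γ(y) = Λφ(y)·∫₁^y dx/(x·Λφ(x)²)`. -/
def Gam (y : ℝ) : ℝ := Lphi y * ∫ x in (1:ℝ)..y, 1 / (x * (Lphi x) ^ 2)

/-- Explicit form of Γ. -/
def Gex (y : ℝ) : ℝ := y / 4 - 1 / (4 * y) + y * Real.log y / (1 + y ^ 2)

/-- First derivative of Gex. -/
def Gex' (y : ℝ) : ℝ :=
  1 / 4 + 1 / (4 * y ^ 2) + 1 / (1 + y ^ 2) + (1 - y ^ 2) * Real.log y / (1 + y ^ 2) ^ 2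

/-- Second derivative of Gex. -/
def Gex'' (y : ℝ) : ℝ :=
  -(1 / (2 * y ^ 3)) - 2 * y / (1 + y ^ 2) ^ 2 + (1 - y ^ 4) / (y * (1 + y ^ 2) ^ 3)
    - 2 * y * (3 - y ^ 2) * Real.log y / (1 + y ^ 2) ^ 3

/-- Antiderivative of the integrand. -/
def Fant (x : ℝ) : ℝ := x ^ 2 / 8 - 1 / (8 * x ^ 2) + Real.log x / 2

lemma hF {x : ℝ} (hx : 0 < x) : HasDerivAt Fant (1 / (x * (Lphi x) ^ 2)) x := by
  have hx' : x ≠ 0 := hx.ne'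
  have hne : (8 : ℝ) * x ^ 2 ≠ 0 := by positivity
  have h2 : HasDerivAt (fun x : ℝ => x ^ 2) (2 * x) x := by
    simpa using hasDerivAt_pow 2 x
  have hA : HasDerivAt (fun x : ℝ => x ^ 2 / 8) (2 * x / 8) x := h2.div_const 8
  have hB : HasDerivAt (fun x : ℝ => 1 / (8 * x ^ 2))
      (-(8 * (2 * x)) / (8 * x ^ 2) ^ 2) x := by
    simpa [one_div] using (h2.const_mul 8).fun_inv hne
  have hC : HasDerivAt (fun x : ℝ => Real.log x / 2) (x⁻¹ / 2) x :=
    (Real.hasDerivAt_log hx').div_const 2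
  have h := (hA.sub hB).add hC
  refine h.congr_deriv ?_
  unfold Lphi
  have h1 : (1 : ℝ) + x ^ 2 ≠ 0 := by positivity
  field_simp
  ring

lemma hGd {y : ℝ} (hy : 0 < y) : HasDerivAt Gex (Gex' y) y := by
  have hy' : y ≠ 0 := hy.ne'
  have h1 : (1 : ℝ) + y ^ 2 ≠ 0 := by positivity
  have h4 : (4 : ℝ) * y ≠ 0 := by positivity
  have h2 : HasDerivAt (fun y : ℝ => y ^ 2) (2 * y) y := by
    simpa using hasDerivAt_pow 2 y
  have hA : HasDerivAt (fun y : ℝ => y / 4) (1 / 4) y := by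
    simpa using (hasDerivAt_id y).div_const 4
  have hB : HasDerivAt (fun y : ℝ => 1 / (4 * y)) (-(4 * 1) / (4 * y) ^ 2) y := by
    simpa [one_div] using ((hasDerivAt_id y).const_mul 4).fun_inv h4
  have hnum : HasDerivAt (fun y : ℝ => y * Real.log y) (1 * Real.log y + y * y⁻¹) y := by
    simpa using (hasDerivAt_id y).fun_mul (Real.hasDerivAt_log hy')
  have hden : HasDerivAt (fun y : ℝ => 1 + y ^ 2) (2 * y) y := by
    simpa using h2.const_add 1
  have hC := hnum.div hden h1
  have h := (hA.sub hB).add hC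
  refine h.congr_deriv ?_
  unfold Gex'
  field_simp
  ring

lemma hGd2 {y : ℝ} (hy : 0 < y) : HasDerivAt Gex' (Gex'' y) y := by
  have hy' : y ≠ 0 := hy.ne'
  have h1 : (1 : ℝ) + y ^ 2 ≠ 0 := by positivity
  have h4 : (4 : ℝ) * y ^ 2 ≠ 0 := by positivity
  have h2 : HasDerivAt (fun y : ℝ => y ^ 2) (2 * y) y := by
    simpa using hasDerivAt_pow 2 y
  have hden : HasDerivAt (fun y : ℝ => 1 + y ^ 2) (2 * y) y := by
    simpa using h2.const_add 1
  have hA : HasDerivAt (fun _ : ℝ => (1 : ℝ) / 4) 0 y := hasDerivAt_const y _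
  have hB : HasDerivAt (fun y : ℝ => 1 / (4 * y ^ 2))
      (-(4 * (2 * y)) / (4 * y ^ 2) ^ 2) y := by
    simpa [one_div] using (h2.const_mul 4).fun_inv h4
  have hC : HasDerivAt (fun y : ℝ => 1 / (1 + y ^ 2)) (-(2 * y) / (1 + y ^ 2) ^ 2) y := by
    simpa [one_div] using hden.fun_inv h1
  have hnum : HasDerivAt (fun y : ℝ => (1 - y ^ 2) * Real.log y)
      ((0 - 2 * y) * Real.log y + (1 - y ^ 2) * y⁻¹) y :=
    ((hasDerivAt_const y (1 : ℝ)).sub h2).mul (Real.hasDerivAt_log hy')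
  have hden2 : HasDerivAt (fun y : ℝ => (1 + y ^ 2) ^ 2)
      (↑2 * (1 + y ^ 2) ^ 1 * (2 * y)) y := hden.pow 2
  have hD := hnum.div hden2 (pow_ne_zero 2 h1)
  have h := ((hA.add hB).add hC).add hD
  refine h.congr_deriv ?_
  unfold Gex''
  field_simp
  ring

lemma Gam_eq {y : ℝ} (hy : 0 < y) : Gam y = Gex y := by
  have hpos : ∀ x ∈ Set.uIcc (1 : ℝ) y, 0 < x := by
    intro x hx
    have h0 : 0 < min 1 y := lt_min one_pos hy
    have := hx.1
    linarith
  have hint : IntervalIntegrable (fun x => 1 / (x * (Lphi x) ^ 2)) volume 1 y := by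
    apply ContinuousOn.intervalIntegrable
    intro x hx
    have hx0 := hpos x hx
    have h1 : (1 : ℝ) + x ^ 2 ≠ 0 := by positivity
    have hL : Lphi x ≠ 0 := by unfold Lphi; positivity
    apply ContinuousAt.continuousWithinAt
    have hLc : ContinuousAt Lphi x := by
      unfold Lphi
      exact (continuousAt_const.mul continuousAt_id).div (by fun_prop) h1
    exact continuousAt_const.div (continuousAt_id.mul (hLc.pow 2))
      (mul_ne_zero hx0.ne' (pow_ne_zero 2 hL))
  have heq : (∫ x in (1 : ℝ)..y, 1 / (x * (Lphi x) ^ 2)) = Fant y - Fant 1 :=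
    intervalIntegral.integral_eq_sub_of_hasDerivAt (fun x hx => hF (hpos x hx)) hint
  rw [Gam, heq]
  have hF1 : Fant 1 = 0 := by simp [Fant]
  rw [hF1, sub_zero]
  unfold Fant Gex Lphi
  have h1 : (1 : ℝ) + y ^ 2 ≠ 0 := by positivity
  have hy' : y ≠ 0 := hy.ne'
  field_simp
  ring

lemma deriv_Gam_eq {y : ℝ} (hy : 0 < y) : deriv Gam y = Gex' y := by
  have hev : Gam =ᶠ[nhds y] Gex := by
    filter_upwards [isOpen_Ioi.mem_nhds hy] with x hx using Gam_eq hx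
  rw [hev.deriv_eq]
  exact (hGd hy).deriv

lemma deriv2_Gam_eq {y : ℝ} (hy : 0 < y) : deriv (deriv Gam) y = Gex'' y := by
  have hev : deriv Gam =ᶠ[nhds y] Gex' := by
    filter_upwards [isOpen_Ioi.mem_nhds hy] with x hx using deriv_Gam_eq hx
  rw [hev.deriv_eq]
  exact (hGd2 hy).deriv

/-- `HΓ = 0` on `(0,∞)`; moreover `Γ(y) = y/4 + O(log y / y)` as `y → ∞` and
`Γ(y) = O(1/y)` as `y → 0`. -/
theorem Gam_kernel_and_asymptotics :
    (∀ y : ℝ, 0 < y → Hop Gam y = 0) ∧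
    ∃ C : ℝ, 0 < C ∧
      (∀ y : ℝ, 2 ≤ y → |Gam y - y / 4| ≤ C * Real.log y / y) ∧
      (∀ y : ℝ, 0 < y → y ≤ 1 → |Gam y| ≤ C / y) := by
  constructor
  · intro y hy
    unfold Hop
    rw [deriv2_Gam_eq hy, deriv_Gam_eq hy, Gam_eq hy]
    unfold Gex Gex' Gex'' Vfun
    have h1 : (1 : ℝ) + y ^ 2 ≠ 0 := by positivity
    have hy' : y ≠ 0 := hy.ne'
    field_simp
    ring
  · refine ⟨2, by norm_num, ?_, ?_⟩
    · intro y hy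
      have hy0 : (0 : ℝ) < y := by linarith
      have h1 : (0 : ℝ) < 1 + y ^ 2 := by positivity
      rw [Gam_eq hy0]
      have hL2 : (1 : ℝ) / 4 ≤ Real.log y := by
        have hd9 := Real.log_two_gt_d9
        have h2 : Real.log 2 ≤ Real.log y := by
          apply Real.log_le_log (by norm_num) hy
        linarith
      have hL0 : 0 ≤ Real.log y := by linarith
      have hsplit : Gex y - y / 4 = -(1 / (4 * y)) + y * Real.log y / (1 + y ^ 2) := by
        unfold Gex; ring
      rw [hsplit]
      have hb1 : 1 / (4 * y) ≤ Real.log y / y := by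
        rw [div_le_div_iff₀ (by positivity) hy0]
        nlinarith
      have hb2 : y * Real.log y / (1 + y ^ 2) ≤ Real.log y / y := by
        rw [div_le_div_iff₀ h1 hy0]
        nlinarith
      calc |(-(1 / (4 * y)) + y * Real.log y / (1 + y ^ 2))|
          ≤ |(-(1 / (4 * y)))| + |y * Real.log y / (1 + y ^ 2)| := abs_add_le _ _
        _ = 1 / (4 * y) + y * Real.log y / (1 + y ^ 2) := by
            rw [abs_neg, abs_of_nonneg (by positivity),
              abs_of_nonneg (div_nonneg (mul_nonneg hy0.le hL0) h1.le)]
        _ ≤ Real.log y / y + Real.log y / y := add_le_add hb1 hb2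
        _ = 2 * Real.log y / y := by ring
    · intro y hy0 hy1
      have h1 : (0 : ℝ) < 1 + y ^ 2 := by positivity
      rw [Gam_eq hy0]
      have hLneg : Real.log y ≤ 0 := Real.log_nonpos hy0.le hy1
      have hnegL : -Real.log y ≤ 1 / y := by
        have h := Real.log_le_sub_one_of_pos (show (0 : ℝ) < y⁻¹ by positivity)
        rw [Real.log_inv] at h
        rw [one_div]
        linarith
      have habs : |y * Real.log y / (1 + y ^ 2)| = y * (-Real.log y) / (1 + y ^ 2) := by
        rw [abs_div, abs_mul, abs_of_pos hy0, abs_of_pos h1, abs_of_nonpos hLneg]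
      have hb1 : y / 4 ≤ 1 / (4 * y) := by
        rw [div_le_div_iff₀ (by norm_num) (by positivity)]
        nlinarith
      have hb3 : y * (-Real.log y) / (1 + y ^ 2) ≤ 1 / y := by
        have hyL : y * (-Real.log y) ≤ 1 := by
          calc y * (-Real.log y) ≤ y * (1 / y) :=
                mul_le_mul_of_nonneg_left hnegL hy0.le
            _ = 1 := by field_simp
        calc y * (-Real.log y) / (1 + y ^ 2) ≤ 1 / (1 + y ^ 2) := by gcongr
          _ ≤ 1 / 1 := by gcongr; · norm_num; · nlinarith
          _ ≤ 1 / y := by rw [div_le_div_iff₀ (by norm_num) hy0]; linarith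
      calc |Gex y|
          ≤ |y / 4| + |(-(1 / (4 * y)))| + |y * Real.log y / (1 + y ^ 2)| := by
            unfold Gex
            have : y / 4 - 1 / (4 * y) + y * Real.log y / (1 + y ^ 2)
                = y / 4 + (-(1 / (4 * y))) + y * Real.log y / (1 + y ^ 2) := by ring
            rw [this]
            exact (abs_add_le _ _).trans (add_le_add_left (abs_add_le _ _) _)
        _ = y / 4 + 1 / (4 * y) + y * (-Real.log y) / (1 + y ^ 2) := by
            rw [abs_of_pos (by positivity), abs_neg, abs_of_pos (by positivity), habs]
        _ ≤ 1 / (4 * y) + 1 / (4 * y) + 1 / y := by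
            exact add_le_add (add_le_add hb1 le_rfl) hb3
        _ = (3 / 2) / y := by field_simp; ring
        _ ≤ 2 / y := by gcongr; norm_num
end
end

section
/- Let g : (0,∞) → ℝ be continuous and satisfy |g(x)| ≤ C₀·x for all x ∈ (0,1] and some C₀ > 0. Then the function u(y) = Λφ(y)·∫₀^y g(x)Γ(x) x dx − Γ(y)·∫₀^y g(x)Λφ(x) x dx is well defined and twice continuously differentiable on (0,∞), and satisfies Hu = g on (0,∞) (variation-of-parameters representation of the inverse of H). -/
open MeasureTheory Real Set

noncomputable section

/-! ### Auxiliary explicit formulas -/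

/-- Explicit formula for `Γ` on `(0,∞)`. -/
def Gx (y : ℝ) : ℝ := Real.log y * (y / (1 + y ^ 2)) + (y ^ 2 - 1) / (4 * y)

def Lphi1 (y : ℝ) : ℝ := 2 * (1 - y ^ 2) / (1 + y ^ 2) ^ 2
def Lphi2 (y : ℝ) : ℝ := (4 * y ^ 3 - 12 * y) / (1 + y ^ 2) ^ 3
def Gx1 (y : ℝ) : ℝ :=
  (Real.log y * (1 - y ^ 2) + (1 + y ^ 2)) / (1 + y ^ 2) ^ 2 + (1 + y ^ 2) / (4 * y ^ 2)
def Gx2 (y : ℝ) : ℝ :=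
  (1 - 2 * y ^ 2 - 3 * y ^ 4 + Real.log y * (2 * y ^ 4 - 6 * y ^ 2)) / (y * (1 + y ^ 2) ^ 3)
    - 1 / (2 * y ^ 3)

lemma one_add_sq_pos (y : ℝ) : (0:ℝ) < 1 + y ^ 2 := by positivity

lemma hasDerivAt_Lphi (y : ℝ) : HasDerivAt Lphi (Lphi1 y) y := by
  have h : HasDerivAt (fun y : ℝ => 2 * y / (1 + y ^ 2))
      ((2 * (1 + y ^ 2) - 2 * y * (2 * y)) / (1 + y ^ 2) ^ 2) y := by
    exact (((hasDerivAt_id y).const_mul 2).div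
      (((hasDerivAt_id y).pow 2).const_add 1) (one_add_sq_pos y).ne')
      |>.congr_deriv (by simp only [id_eq, Pi.pow_apply]; ring)
  refine h.congr_deriv ?_
  unfold Lphi1
  field_simp
  ring

lemma hasDerivAt_Lphi1 (y : ℝ) : HasDerivAt Lphi1 (Lphi2 y) y := by
  have h := ((((hasDerivAt_id y).pow 2).const_sub 1).const_mul 2).div
      ((((hasDerivAt_id y).pow 2).const_add 1).pow 2) (by positivity : ((1 + y ^ 2) ^ 2 : ℝ) ≠ 0)
  refine h.congr_deriv ?_
  unfold Lphi2
  have h1 : (1 + y ^ 2 : ℝ) ≠ 0 := (one_add_sq_pos y).ne'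
  simp only [id_eq, Pi.pow_apply]
  field_simp
  ring

lemma hasDerivAt_Gx {y : ℝ} (hy : 0 < y) : HasDerivAt Gx (Gx1 y) y := by
  have hlog := Real.hasDerivAt_log hy.ne'
  have h1 : (1 + y ^ 2 : ℝ) ≠ 0 := (one_add_sq_pos y).ne'
  have ha : HasDerivAt (fun y : ℝ => Real.log y * (y / (1 + y ^ 2)))
      (y⁻¹ * (y / (1 + y ^ 2)) +
        Real.log y * ((1 * (1 + y ^ 2) - y * (2 * y)) / (1 + y ^ 2) ^ 2)) y :=
    hlog.mul ((hasDerivAt_id y).div (((hasDerivAt_id y).pow 2).const_add 1) h1 |>.congr_deriv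
      (by simp only [id_eq, Pi.pow_apply]; ring))
  have hb : HasDerivAt (fun y : ℝ => (y ^ 2 - 1) / (4 * y))
      (((2 * y) * (4 * y) - (y ^ 2 - 1) * 4) / (4 * y) ^ 2) y := by
    exact (((hasDerivAt_id y).pow 2).sub_const 1).div ((hasDerivAt_id y).const_mul 4)
      (by positivity) |>.congr_deriv (by simp only [id_eq, Pi.pow_apply]; ring)
  refine (ha.add hb).congr_deriv ?_
  unfold Gx1
  field_simp
  ring

lemma hasDerivAt_Gx1 {y : ℝ} (hy : 0 < y) : HasDerivAt Gx1 (Gx2 y) y := by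
  have hlog := Real.hasDerivAt_log hy.ne'
  have h1 : (1 + y ^ 2 : ℝ) ≠ 0 := (one_add_sq_pos y).ne'
  have ha : HasDerivAt (fun y : ℝ => (Real.log y * (1 - y ^ 2) + (1 + y ^ 2)) / (1 + y ^ 2) ^ 2)
      (((y⁻¹ * (1 - y ^ 2) + Real.log y * (-(2 * y)) + 2 * y) * (1 + y ^ 2) ^ 2 -
        (Real.log y * (1 - y ^ 2) + (1 + y ^ 2)) * (2 * (1 + y ^ 2) * (2 * y))) /
        ((1 + y ^ 2) ^ 2) ^ 2) y := by
    have hnum : HasDerivAt (fun y : ℝ => Real.log y * (1 - y ^ 2) + (1 + y ^ 2))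
        (y⁻¹ * (1 - y ^ 2) + Real.log y * (-(2 * y)) + 2 * y) y := by
      exact (hlog.mul (((hasDerivAt_id y).pow 2).const_sub 1
          |>.congr_deriv (by simp only [id_eq]; ring))).add
        (((hasDerivAt_id y).pow 2).const_add 1 |>.congr_deriv (by simp only [id_eq]; ring))
    have hden : HasDerivAt (fun y : ℝ => ((1 + y ^ 2) ^ 2 : ℝ)) (2 * (1 + y ^ 2) * (2 * y)) y := by
      exact ((((hasDerivAt_id y).pow 2).const_add 1).pow 2).congr_deriv
        (by simp only [id_eq, Pi.pow_apply]; ring)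
    exact hnum.div hden (by positivity)
  have hb : HasDerivAt (fun y : ℝ => (1 + y ^ 2) / (4 * y ^ 2))
      ((2 * y * (4 * y ^ 2) - (1 + y ^ 2) * (8 * y)) / (4 * y ^ 2) ^ 2) y := by
    exact (((hasDerivAt_id y).pow 2).const_add 1 |>.congr_deriv (by simp only [id_eq]; ring)).div
      (((hasDerivAt_id y).pow 2).const_mul 4 |>.congr_deriv (by simp only [id_eq]; ring))
      (by positivity)
  refine (ha.add hb).congr_deriv ?_
  unfold Gx2
  field_simp
  ring

def Fx (x : ℝ) : ℝ := -1 / (8 * x ^ 2) + Real.log x / 2 + x ^ 2 / 8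

lemma hasDerivAt_Fx {x : ℝ} (hx : 0 < x) : HasDerivAt Fx (1 / (x * (Lphi x) ^ 2)) x := by
  have h1 : HasDerivAt (fun x : ℝ => -1 / (8 * x ^ 2))
      ((0 * (8 * x ^ 2) - (-1) * (8 * (2 * x))) / (8 * x ^ 2) ^ 2) x := by
    exact (hasDerivAt_const x (-1)).div
      (((hasDerivAt_id x).pow 2).const_mul 8 |>.congr_deriv (by simp only [id_eq]; ring))
      (by positivity)
  have h2 : HasDerivAt (fun x : ℝ => Real.log x / 2) (x⁻¹ / 2) x :=
    (Real.hasDerivAt_log hx.ne').div_const 2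
  have h3 : HasDerivAt (fun x : ℝ => x ^ 2 / 8) (2 * x / 8) x :=
    ((hasDerivAt_id x).pow 2).div_const 8 |>.congr_deriv (by simp only [id_eq]; ring)
  refine ((h1.add h2).add h3).congr_deriv ?_
  unfold Lphi
  have h4 : (1 + x ^ 2 : ℝ) ≠ 0 := (one_add_sq_pos x).ne'
  field_simp
  ring

lemma continuousOn_integrand : ContinuousOn (fun x : ℝ => 1 / (x * (Lphi x) ^ 2)) (Ioi 0) := by
  intro x hx
  have hx' : (0:ℝ) < x := hx
  have h4 : (1 + x ^ 2 : ℝ) ≠ 0 := (one_add_sq_pos x).ne'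
  apply ContinuousAt.continuousWithinAt
  have hL : ContinuousAt Lphi x := by
    unfold Lphi; exact (continuousAt_const.mul continuousAt_id).div (by fun_prop) h4
  apply continuousAt_const.div (continuousAt_id.mul (hL.pow 2))
  have : Lphi x > 0 := by unfold Lphi; positivity
  exact mul_ne_zero hx'.ne' (pow_ne_zero 2 this.ne')

lemma Gam_eq_Gx {y : ℝ} (hy : 0 ≤ y) : Gam y = Gx y := by
  rcases eq_or_lt_of_le hy with rfl | hy'
  · simp [Gam, Gx, Lphi]
  · have hsub : uIcc (1:ℝ) y ⊆ Ioi 0 := by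
      rw [uIcc_eq_union]
      rintro x (hx | hx)
      · exact lt_of_lt_of_le one_pos hx.1
      · exact lt_of_lt_of_le hy' hx.1
    have hint : ∫ x in (1:ℝ)..y, 1 / (x * (Lphi x) ^ 2) = Fx y - Fx 1 := by
      apply intervalIntegral.integral_eq_sub_of_hasDerivAt
      · intro x hx
        exact hasDerivAt_Fx (hsub hx)
      · exact (continuousOn_integrand.mono hsub).intervalIntegrable
    rw [Gam, hint]
    unfold Fx Gx Lphi
    have h4 : (1 + y ^ 2 : ℝ) ≠ 0 := (one_add_sq_pos y).ne'
    simp only [Real.log_one]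
    field_simp
    ring

lemma kernel_Lphi {y : ℝ} (hy : 0 < y) :
    -(Lphi2 y) - Lphi1 y / y + Vfun y / y ^ 2 * Lphi y = 0 := by
  unfold Lphi2 Lphi1 Vfun Lphi
  have h4 : (1 + y ^ 2 : ℝ) ≠ 0 := (one_add_sq_pos y).ne'
  field_simp
  ring

lemma kernel_Gx {y : ℝ} (hy : 0 < y) :
    -(Gx2 y) - Gx1 y / y + Vfun y / y ^ 2 * Gx y = 0 := by
  unfold Gx2 Gx1 Vfun Gx
  have h4 : (1 + y ^ 2 : ℝ) ≠ 0 := (one_add_sq_pos y).ne'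
  field_simp
  ring

lemma wronskian_eq {y : ℝ} (hy : 0 < y) :
    Lphi y * Gx1 y - Lphi1 y * Gx y = 1 / y := by
  unfold Lphi Gx1 Lphi1 Gx
  have h4 : (1 + y ^ 2 : ℝ) ≠ 0 := (one_add_sq_pos y).ne'
  field_simp
  ring

lemma intervalIntegrable_of_bound (f : ℝ → ℝ) (hf : ContinuousOn f (Ioi 0)) (M : ℝ)
    (hb : ∀ x ∈ Ioc (0:ℝ) 1, |f x| ≤ M) {y : ℝ} (hy : 0 < y) :
    IntervalIntegrable f volume 0 y := by
  have h01 : IntervalIntegrable f volume 0 1 := by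
    rw [intervalIntegrable_iff_integrableOn_Ioc_of_le zero_le_one]
    have hmeas : AEStronglyMeasurable f (volume.restrict (Ioc (0:ℝ) 1)) :=
      (hf.mono (fun x hx => hx.1)).aestronglyMeasurable measurableSet_Ioc
    refine ⟨hmeas, HasFiniteIntegral.restrict_of_bounded (C := M) measure_Ioc_lt_top ?_⟩
    filter_upwards [ae_restrict_mem measurableSet_Ioc] with x hx
    simpa [Real.norm_eq_abs] using hb x hx
  rcases le_or_gt y 1 with h | h
  · exact h01.mono_set (by
      rw [uIcc_of_le hy.le, uIcc_of_le zero_le_one]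
      exact Icc_subset_Icc le_rfl h)
  · refine h01.trans ((hf.mono ?_).intervalIntegrable)
    rw [uIcc_of_le h.le]
    exact fun x hx => lt_of_lt_of_le one_pos hx.1

lemma abs_log_le {x : ℝ} (hx : 0 < x) (hx1 : x ≤ 1) : |Real.log x| ≤ 1 / x := by
  rw [abs_of_nonpos (Real.log_nonpos hx.le hx1)]
  have h := Real.log_le_sub_one_of_pos (x := x⁻¹) (by positivity)
  rw [Real.log_inv] at h
  have : (0:ℝ) ≤ x⁻¹ := by positivity
  rw [one_div]
  linarith

lemma abs_Gx_le {x : ℝ} (hx : 0 < x) (hx1 : x ≤ 1) : |Gx x| ≤ 1 + 1 / (4 * x) := by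
  unfold Gx
  have h1 : |Real.log x * (x / (1 + x ^ 2))| ≤ 1 := by
    rw [abs_mul]
    have ha : |x / (1 + x ^ 2)| ≤ x := by
      rw [abs_of_nonneg (by positivity), div_le_iff₀ (one_add_sq_pos x)]
      nlinarith
    calc |Real.log x| * |x / (1 + x ^ 2)| ≤ (1 / x) * x := by
          apply mul_le_mul (abs_log_le hx hx1) ha (abs_nonneg _) (by positivity)
      _ = 1 := by field_simp
  have h2 : |(x ^ 2 - 1) / (4 * x)| ≤ 1 / (4 * x) := by
    rw [abs_div, abs_of_nonneg (by positivity : (0:ℝ) ≤ 4 * x)]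
    apply div_le_div_of_nonneg_right ?_ (by positivity)
    rw [abs_le]; constructor <;> nlinarith
  calc |Real.log x * (x / (1 + x ^ 2)) + (x ^ 2 - 1) / (4 * x)|
      ≤ |Real.log x * (x / (1 + x ^ 2))| + |(x ^ 2 - 1) / (4 * x)| := abs_add_le _ _
    _ ≤ 1 + 1 / (4 * x) := add_le_add h1 h2

lemma abs_Lphi_le_one (x : ℝ) : |Lphi x| ≤ 1 := by
  unfold Lphi
  rw [abs_div, abs_of_nonneg (one_add_sq_pos x).le, div_le_one (one_add_sq_pos x)]
  nlinarith [sq_nonneg (|2 * x| - 2), sq_abs (2 * x), abs_nonneg (2 * x)]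

lemma continuousOn_Gx2 : ContinuousOn Gx2 (Ioi 0) := by
  intro y hy
  have hy' : (0:ℝ) < y := hy
  apply ContinuousAt.continuousWithinAt
  have hl : ContinuousAt Real.log y := Real.continuousAt_log hy'.ne'
  unfold Gx2
  have h1 : ContinuousAt
      (fun y : ℝ => 1 - 2 * y ^ 2 - 3 * y ^ 4 + Real.log y * (2 * y ^ 4 - 6 * y ^ 2)) y :=
    ContinuousAt.add (by fun_prop) (hl.mul (by fun_prop))
  exact (h1.div (by fun_prop) (by positivity)).sub
    (continuousAt_const.div (by fun_prop) (by positivity))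

lemma continuous_Lphi : Continuous Lphi :=
  continuous_iff_continuousAt.2 fun y => (hasDerivAt_Lphi y).continuousAt

lemma continuous_Lphi1 : Continuous Lphi1 :=
  continuous_iff_continuousAt.2 fun y => (hasDerivAt_Lphi1 y).continuousAt

lemma continuous_Lphi2 : Continuous Lphi2 := by
  refine continuous_iff_continuousAt.2 fun y => ?_
  unfold Lphi2
  exact ContinuousAt.div (by fun_prop) (by fun_prop) (by positivity)

lemma continuousOn_Gx : ContinuousOn Gx (Ioi 0) :=
  fun y hy => (hasDerivAt_Gx hy).continuousAt.continuousWithinAt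

lemma continuousOn_Gx1 : ContinuousOn Gx1 (Ioi 0) :=
  fun y hy => (hasDerivAt_Gx1 hy).continuousAt.continuousWithinAt

lemma continuousOn_Gam : ContinuousOn Gam (Ioi 0) :=
  continuousOn_Gx.congr fun y hy => Gam_eq_Gx (le_of_lt hy)

/-- Variation of parameters: if `g` is continuous on `(0,∞)` with `|g(x)| ≤ C₀ x` for
`x ∈ (0,1]`, then `u(y) = Λφ(y)·∫₀^y gΓ x dx − Γ(y)·∫₀^y gΛφ x dx` is well defined,
`C²` on `(0,∞)`, and solves `Hu = g` on `(0,∞)`. -/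
theorem variation_of_parameters (g : ℝ → ℝ) (C₀ : ℝ) (hC₀ : 0 < C₀)
    (hg : ContinuousOn g (Set.Ioi 0))
    (hgb : ∀ x : ℝ, 0 < x → x ≤ 1 → |g x| ≤ C₀ * x) :
    (∀ y : ℝ, 0 < y →
      IntervalIntegrable (fun x => g x * Gam x * x) volume 0 y ∧
      IntervalIntegrable (fun x => g x * Lphi x * x) volume 0 y) ∧
    ContDiffOn ℝ 2
      (fun y => Lphi y * (∫ x in (0:ℝ)..y, g x * Gam x * x)
          - Gam y * (∫ x in (0:ℝ)..y, g x * Lphi x * x)) (Set.Ioi 0) ∧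
    (∀ y : ℝ, 0 < y →
      Hop (fun y => Lphi y * (∫ x in (0:ℝ)..y, g x * Gam x * x)
          - Gam y * (∫ x in (0:ℝ)..y, g x * Lphi x * x)) y = g y) := by
  -- continuity of the integrands
  have hf₁c : ContinuousOn (fun x => g x * Gam x * x) (Ioi 0) :=
    (hg.mul continuousOn_Gam).mul continuousOn_id
  have hf₂c : ContinuousOn (fun x => g x * Lphi x * x) (Ioi 0) :=
    (hg.mul continuous_Lphi.continuousOn).mul continuousOn_id
  -- bounds near 0
  have hb₁ : ∀ x ∈ Ioc (0:ℝ) 1, |g x * Gam x * x| ≤ 2 * C₀ := by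
    rintro x ⟨hx0, hx1⟩
    rw [abs_mul, abs_mul, Gam_eq_Gx hx0.le, abs_of_nonneg hx0.le]
    calc |g x| * |Gx x| * x ≤ (C₀ * x) * (1 + 1 / (4 * x)) * x := by
          apply mul_le_mul_of_nonneg_right _ hx0.le
          exact mul_le_mul (hgb x hx0 hx1) (abs_Gx_le hx0 hx1) (abs_nonneg _) (by positivity)
      _ = C₀ * (x ^ 2 + x / 4) := by field_simp
      _ ≤ 2 * C₀ := by
          have h5 : x ^ 2 + x / 4 ≤ 2 := by nlinarith
          nlinarith [mul_le_mul_of_nonneg_left h5 hC₀.le]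
  have hb₂ : ∀ x ∈ Ioc (0:ℝ) 1, |g x * Lphi x * x| ≤ 2 * C₀ := by
    rintro x ⟨hx0, hx1⟩
    rw [abs_mul, abs_mul, abs_of_nonneg hx0.le]
    calc |g x| * |Lphi x| * x ≤ (C₀ * x) * 1 * x := by
          apply mul_le_mul_of_nonneg_right _ hx0.le
          exact mul_le_mul (hgb x hx0 hx1) (abs_Lphi_le_one x) (abs_nonneg _) (by positivity)
      _ = C₀ * x ^ 2 := by ring
      _ ≤ 2 * C₀ := by
          have h5 : x ^ 2 ≤ 2 := by nlinarith
          nlinarith [mul_le_mul_of_nonneg_left h5 hC₀.le]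
  have hInt₁ : ∀ y : ℝ, 0 < y → IntervalIntegrable (fun x => g x * Gam x * x) volume 0 y :=
    fun y hy => intervalIntegrable_of_bound _ hf₁c (2 * C₀) hb₁ hy
  have hInt₂ : ∀ y : ℝ, 0 < y → IntervalIntegrable (fun x => g x * Lphi x * x) volume 0 y :=
    fun y hy => intervalIntegrable_of_bound _ hf₂c (2 * C₀) hb₂ hy
  -- FTC
  have hAder : ∀ y ∈ Ioi (0:ℝ), HasDerivAt (fun y => ∫ x in (0:ℝ)..y, g x * Gam x * x)
      (g y * Gam y * y) y := fun y hy =>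
    intervalIntegral.integral_hasDerivAt_right (hInt₁ y hy)
      (hf₁c.stronglyMeasurableAtFilter isOpen_Ioi y hy)
      (hf₁c.continuousAt (isOpen_Ioi.mem_nhds hy))
  have hBder : ∀ y ∈ Ioi (0:ℝ), HasDerivAt (fun y => ∫ x in (0:ℝ)..y, g x * Lphi x * x)
      (g y * Lphi y * y) y := fun y hy =>
    intervalIntegral.integral_hasDerivAt_right (hInt₂ y hy)
      (hf₂c.stronglyMeasurableAtFilter isOpen_Ioi y hy)
      (hf₂c.continuousAt (isOpen_Ioi.mem_nhds hy))
  -- first derivative of u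
  have huder : ∀ y ∈ Ioi (0:ℝ), HasDerivAt
      (fun y => Lphi y * (∫ x in (0:ℝ)..y, g x * Gam x * x)
        - Gam y * (∫ x in (0:ℝ)..y, g x * Lphi x * x))
      (Lphi1 y * (∫ x in (0:ℝ)..y, g x * Gam x * x)
        - Gx1 y * (∫ x in (0:ℝ)..y, g x * Lphi x * x)) y := by
    intro y hy
    have hy' : (0:ℝ) < y := hy
    have hv : HasDerivAt (fun y => Lphi y * (∫ x in (0:ℝ)..y, g x * Gam x * x)
        - Gx y * (∫ x in (0:ℝ)..y, g x * Lphi x * x))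
        ((Lphi1 y * (∫ x in (0:ℝ)..y, g x * Gam x * x) + Lphi y * (g y * Gam y * y))
          - (Gx1 y * (∫ x in (0:ℝ)..y, g x * Lphi x * x) + Gx y * (g y * Lphi y * y))) y :=
      ((hasDerivAt_Lphi y).mul (hAder y hy)).sub ((hasDerivAt_Gx hy').mul (hBder y hy))
    have heq : (fun y => Lphi y * (∫ x in (0:ℝ)..y, g x * Gam x * x)
        - Gam y * (∫ x in (0:ℝ)..y, g x * Lphi x * x)) =ᶠ[nhds y]
        (fun y => Lphi y * (∫ x in (0:ℝ)..y, g x * Gam x * x)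
        - Gx y * (∫ x in (0:ℝ)..y, g x * Lphi x * x)) := by
      filter_upwards [isOpen_Ioi.mem_nhds hy] with z hz
      rw [Gam_eq_Gx (le_of_lt hz)]
    refine (hv.congr_of_eventuallyEq heq).congr_deriv ?_
    rw [Gam_eq_Gx hy'.le]
    ring
  -- second derivative
  have hu1der : ∀ y ∈ Ioi (0:ℝ), HasDerivAt
      (fun y => Lphi1 y * (∫ x in (0:ℝ)..y, g x * Gam x * x)
        - Gx1 y * (∫ x in (0:ℝ)..y, g x * Lphi x * x))
      ((Lphi2 y * (∫ x in (0:ℝ)..y, g x * Gam x * x) + Lphi1 y * (g y * Gam y * y))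
        - (Gx2 y * (∫ x in (0:ℝ)..y, g x * Lphi x * x) + Gx1 y * (g y * Lphi y * y))) y :=
    fun y hy =>
      ((hasDerivAt_Lphi1 y).mul (hAder y hy)).sub ((hasDerivAt_Gx1 hy).mul (hBder y hy))
  -- continuity of A and B
  have hAc : ContinuousOn (fun y => ∫ x in (0:ℝ)..y, g x * Gam x * x) (Ioi 0) :=
    fun y hy => (hAder y hy).continuousAt.continuousWithinAt
  have hBc : ContinuousOn (fun y => ∫ x in (0:ℝ)..y, g x * Lphi x * x) (Ioi 0) :=
    fun y hy => (hBder y hy).continuousAt.continuousWithinAt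
  -- continuity of the second derivative
  have hu2c : ContinuousOn
      (fun y => (Lphi2 y * (∫ x in (0:ℝ)..y, g x * Gam x * x) + Lphi1 y * (g y * Gam y * y))
        - (Gx2 y * (∫ x in (0:ℝ)..y, g x * Lphi x * x) + Gx1 y * (g y * Lphi y * y)))
      (Ioi 0) := by
    apply ContinuousOn.sub
    · exact ((continuous_Lphi2.continuousOn).mul hAc).add
        ((continuous_Lphi1.continuousOn).mul
          ((hg.mul continuousOn_Gam).mul continuousOn_id))
    · exact (continuousOn_Gx2.mul hBc).add
        (continuousOn_Gx1.mul ((hg.mul continuous_Lphi.continuousOn).mul continuousOn_id))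
  refine ⟨fun y hy => ⟨hInt₁ y hy, hInt₂ y hy⟩, ?_, ?_⟩
  · -- C² regularity
    have e2 : (2 : WithTop ℕ∞) = 1 + 1 := by norm_num
    rw [e2, contDiffOn_succ_iff_deriv_of_isOpen isOpen_Ioi]
    refine ⟨fun y hy => (huder y hy).differentiableAt.differentiableWithinAt, by simp, ?_⟩
    have hderiv_eq : EqOn
        (deriv (fun y => Lphi y * (∫ x in (0:ℝ)..y, g x * Gam x * x)
          - Gam y * (∫ x in (0:ℝ)..y, g x * Lphi x * x)))
        (fun y => Lphi1 y * (∫ x in (0:ℝ)..y, g x * Gam x * x)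
          - Gx1 y * (∫ x in (0:ℝ)..y, g x * Lphi x * x)) (Ioi 0) :=
      fun y hy => (huder y hy).deriv
    have h1 : ContDiffOn ℝ 1
        (fun y => Lphi1 y * (∫ x in (0:ℝ)..y, g x * Gam x * x)
          - Gx1 y * (∫ x in (0:ℝ)..y, g x * Lphi x * x)) (Ioi 0) := by
      have e1 : (1 : WithTop ℕ∞) = 0 + 1 := by norm_num
      rw [e1, contDiffOn_succ_iff_deriv_of_isOpen isOpen_Ioi]
      refine ⟨fun y hy => (hu1der y hy).differentiableAt.differentiableWithinAt, by simp, ?_⟩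
      rw [contDiffOn_zero]
      exact hu2c.congr fun y hy => (hu1der y hy).deriv
    exact h1.congr hderiv_eq
  · -- the equation Hu = g
    intro y hy
    have hy' : (y:ℝ) ≠ 0 := hy.ne'
    have hd1 : deriv (fun y => Lphi y * (∫ x in (0:ℝ)..y, g x * Gam x * x)
        - Gam y * (∫ x in (0:ℝ)..y, g x * Lphi x * x)) y
        = Lphi1 y * (∫ x in (0:ℝ)..y, g x * Gam x * x)
          - Gx1 y * (∫ x in (0:ℝ)..y, g x * Lphi x * x) := (huder y hy).deriv
    have hdd : deriv (deriv (fun y => Lphi y * (∫ x in (0:ℝ)..y, g x * Gam x * x)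
        - Gam y * (∫ x in (0:ℝ)..y, g x * Lphi x * x))) y
        = (Lphi2 y * (∫ x in (0:ℝ)..y, g x * Gam x * x) + Lphi1 y * (g y * Gam y * y))
          - (Gx2 y * (∫ x in (0:ℝ)..y, g x * Lphi x * x) + Gx1 y * (g y * Lphi y * y)) := by
      have heq : deriv (fun y => Lphi y * (∫ x in (0:ℝ)..y, g x * Gam x * x)
          - Gam y * (∫ x in (0:ℝ)..y, g x * Lphi x * x)) =ᶠ[nhds y]
          (fun y => Lphi1 y * (∫ x in (0:ℝ)..y, g x * Gam x * x)
            - Gx1 y * (∫ x in (0:ℝ)..y, g x * Lphi x * x)) := by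
        filter_upwards [isOpen_Ioi.mem_nhds hy] with z hz
        exact (huder z hz).deriv
      rw [heq.deriv_eq]
      exact (hu1der y hy).deriv
    unfold Hop
    rw [hdd, hd1, Gam_eq_Gx hy.le]
    have hker1 := kernel_Lphi hy
    have hker2 := kernel_Gx hy
    have hw := wronskian_eq hy
    have hyinv : y * (1 / y) = 1 := by field_simp
    linear_combination (∫ x in (0:ℝ)..y, g x * Gam x * x) * hker1
      - (∫ x in (0:ℝ)..y, g x * Lphi x * x) * hker2 + (g y * y) * hw + g y * hyinv
      - (∫ x in (0:ℝ)..y, g x * Lphi x * x) * (Vfun y / y ^ 2) * (Gam_eq_Gx hy.le)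
end
end

section
/- (Logarithmic Hardy inequality.) There exists a universal constant C > 0 such that for every R > 2 and every radially symmetric v ∈ Ḣ¹(ℝ²), represented by a C¹ function v of the radial variable y with ∫₀^∞ |v'(y)|² y dy < ∞: ∫₀^R |v(y)|²/(y²(1+|log y|)²) · y dy ≤ C·( ∫₁² |v(y)|² y dy + ∫₀^R |v'(y)|² y dy ). -/
open MeasureTheory Real Set

noncomputable section

/-- The union of `Ioc (n+2)⁻¹ 1` is `Ioc 0 1`. -/
lemma aux_union : (⋃ n : ℕ, Set.Ioc (((n:ℝ)+2)⁻¹) 1) = Set.Ioc (0:ℝ) 1 := by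
  ext y
  simp only [Set.mem_iUnion, Set.mem_Ioc]
  constructor
  · rintro ⟨n, h1, h2⟩
    refine ⟨lt_trans (by positivity) h1, h2⟩
  · rintro ⟨h1, h2⟩
    obtain ⟨n, hn⟩ := exists_nat_gt y⁻¹
    refine ⟨n, ?_, h2⟩
    have h2' : y⁻¹ < (n:ℝ) + 2 := by linarith
    exact (inv_lt_comm₀ (by positivity) h1).mpr h2'

/-- Monotone-convergence style bound for nonnegative continuous functions on `Ioc 0 1`. -/
lemma int_Ioc01_le {f : ℝ → ℝ} (hc : ContinuousOn f (Set.Ioi 0))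
    (hpos : ∀ y ∈ Set.Ioi (0:ℝ), 0 ≤ f y) {M : ℝ}
    (h : ∀ n : ℕ, ∫ y in Set.Ioc (((n:ℝ)+2)⁻¹) 1, f y ≤ M) :
    IntegrableOn f (Set.Ioc 0 1) ∧ ∫ y in Set.Ioc (0:ℝ) 1, f y ≤ M := by
  have hsub : ∀ n : ℕ, Set.Icc (((n:ℝ)+2)⁻¹) 1 ⊆ Set.Ioi 0 := by
    intro n y hy
    have : (0:ℝ) < ((n:ℝ)+2)⁻¹ := by positivity
    exact lt_of_lt_of_le this hy.1
  have hInt : ∀ n : ℕ, IntegrableOn f (Set.Ioc (((n:ℝ)+2)⁻¹) 1) := fun n =>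
    ((hc.mono (hsub n)).integrableOn_Icc).mono_set Set.Ioc_subset_Icc_self
  have hMnn : 0 ≤ M := le_trans (setIntegral_nonneg measurableSet_Ioc
    (fun y hy => hpos y (lt_trans (by positivity) hy.1))) (h 0)
  set g : ℕ → ℝ → ENNReal := fun n => (Set.Ioc (((n:ℝ)+2)⁻¹) 1).indicator
    (fun y => ENNReal.ofReal (f y)) with hg
  have hgm : ∀ n, AEMeasurable (g n) volume := by
    intro n
    refine (aemeasurable_indicator_iff measurableSet_Ioc).mpr ?_
    exact ((hc.mono ((Set.Ioc_subset_Icc_self).trans (hsub n))).aemeasurable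
      measurableSet_Ioc).ennreal_ofReal
  have hmono : ∀ y, Monotone fun n => g n y := by
    intro y i j hij
    refine Set.indicator_le_indicator_of_subset ?_ (fun _ => zero_le) y
    apply Set.Ioc_subset_Ioc_left
    apply inv_anti₀ (by positivity)
    have : (i:ℝ) ≤ j := Nat.cast_le.mpr hij
    linarith
  have hsup : ∀ y, (⨆ n, g n y) = (Set.Ioc (0:ℝ) 1).indicator
      (fun y => ENNReal.ofReal (f y)) y := by
    intro y
    rw [← aux_union]
    exact (Set.indicator_iUnion_apply (M := ENNReal) rfl _ _ _).symm
  have hlim : ∫⁻ y in Set.Ioc (0:ℝ) 1, ENNReal.ofReal (f y) =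
      ⨆ n : ℕ, ∫⁻ y in Set.Ioc (((n:ℝ)+2)⁻¹) 1, ENNReal.ofReal (f y) := by
    have h1 : ∀ n : ℕ, ∫⁻ y, g n y = ∫⁻ y in Set.Ioc (((n:ℝ)+2)⁻¹) 1, ENNReal.ofReal (f y) :=
      fun n => lintegral_indicator measurableSet_Ioc _
    rw [← lintegral_indicator measurableSet_Ioc,
      show ((Set.Ioc (0:ℝ) 1).indicator fun y => ENNReal.ofReal (f y)) = fun y => ⨆ n, g n y from
        funext fun y => (hsup y).symm,
      lintegral_iSup' hgm (Filter.Eventually.of_forall hmono)]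
    exact iSup_congr h1
  have hnn : ∀ n : ℕ, (0:ℝ→ℝ) ≤ᵐ[volume.restrict (Set.Ioc (((n:ℝ)+2)⁻¹) 1)] f := by
    intro n
    filter_upwards [ae_restrict_mem measurableSet_Ioc] with y hy
    exact hpos y (lt_trans (by positivity) hy.1)
  have heq : ∀ n : ℕ, ∫⁻ y in Set.Ioc (((n:ℝ)+2)⁻¹) 1, ENNReal.ofReal (f y)
      = ENNReal.ofReal (∫ y in Set.Ioc (((n:ℝ)+2)⁻¹) 1, f y) := by
    intro n
    rw [← ofReal_integral_eq_lintegral_ofReal (hInt n) (hnn n)]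
  have hboundL : ∫⁻ y in Set.Ioc (0:ℝ) 1, ENNReal.ofReal (f y) ≤ ENNReal.ofReal M := by
    rw [hlim]
    refine iSup_le fun n => ?_
    rw [heq n]
    exact ENNReal.ofReal_le_ofReal (h n)
  have hmeasf : AEStronglyMeasurable f (volume.restrict (Set.Ioc (0:ℝ) 1)) :=
    (hc.mono (fun y hy => hy.1)).aestronglyMeasurable measurableSet_Ioc
  have hnn0 : (0:ℝ→ℝ) ≤ᵐ[volume.restrict (Set.Ioc (0:ℝ) 1)] f := by
    filter_upwards [ae_restrict_mem measurableSet_Ioc] with y hy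
    exact hpos y hy.1
  have hintf : IntegrableOn f (Set.Ioc 0 1) := by
    refine ⟨hmeasf, ?_⟩
    rw [hasFiniteIntegral_iff_norm]
    calc ∫⁻ y in Set.Ioc (0:ℝ) 1, ENNReal.ofReal ‖f y‖
        = ∫⁻ y in Set.Ioc (0:ℝ) 1, ENNReal.ofReal (f y) := by
          refine lintegral_congr_ae ?_
          filter_upwards [hnn0] with y hy
          rw [Real.norm_of_nonneg hy]
      _ ≤ ENNReal.ofReal M := hboundL
      _ < ⊤ := ENNReal.ofReal_lt_top
  refine ⟨hintf, ?_⟩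
  rw [integral_eq_lintegral_of_nonneg_ae hnn0 hmeasf]
  exact ENNReal.toReal_le_of_le_ofReal hMnn hboundL

/-- Core weighted Hardy step on a compact interval via integration by parts. -/
lemma core_ineq {v G G' : ℝ → ℝ} {a b : ℝ} (hab : a ≤ b)
    (hv : ∀ y ∈ Set.Icc a b, HasDerivAt v (deriv v y) y)
    (hvc : ContinuousOn v (Set.Icc a b))
    (hv'c : ContinuousOn (deriv v) (Set.Icc a b))
    (hG : ∀ y ∈ Set.Icc a b, HasDerivAt G (G' y) y)
    (hGc : ContinuousOn G (Set.Icc a b))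
    (hG'c : ContinuousOn G' (Set.Icc a b))
    (hGsq : ∀ y ∈ Set.Icc a b, G y ^ 2 = G' y * y)
    (hG'pos : ∀ y ∈ Set.Icc a b, 0 < G' y) :
    ∫ y in Set.Ioc a b, (v y) ^ 2 * G' y ≤
      2 * ((v b) ^ 2 * G b - (v a) ^ 2 * G a)
        + 4 * ∫ y in Set.Ioc a b, (deriv v y) ^ 2 * y := by
  set F' : ℝ → ℝ := fun y => 2 * v y * deriv v y * G y + (v y) ^ 2 * G' y with hF'
  have hF : ∀ y ∈ Set.Icc a b, HasDerivAt (fun t => (v t) ^ 2 * G t) (F' y) y := by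
    intro y hy
    have h1 := ((hv y hy).pow 2).mul (hG y hy)
    exact h1.congr_deriv (by simp only [hF']; norm_num <;> ring)
  have hF'c : ContinuousOn F' (Set.Icc a b) := by
    apply ContinuousOn.add
    · exact ((continuousOn_const.mul hvc).mul hv'c).mul hGc
    · exact (hvc.pow 2).mul hG'c
  have hIF' : IntervalIntegrable F' volume a b := by
    apply ContinuousOn.intervalIntegrable
    rwa [Set.uIcc_of_le hab]
  have hFTC : ∫ y in a..b, F' y = (v b) ^ 2 * G b - (v a) ^ 2 * G a :=
    intervalIntegral.integral_eq_sub_of_hasDerivAt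
      (fun y hy => hF y (by rwa [Set.uIcc_of_le hab] at hy)) hIF'
  have hFset : ∫ y in Set.Ioc a b, F' y = (v b) ^ 2 * G b - (v a) ^ 2 * G a := by
    rw [← intervalIntegral.integral_of_le hab, hFTC]
  have hint1 : IntegrableOn (fun y => (v y) ^ 2 * G' y) (Set.Ioc a b) :=
    (((hvc.pow 2).mul hG'c).integrableOn_Icc).mono_set Set.Ioc_subset_Icc_self
  have hint3 : IntegrableOn (fun y => (deriv v y) ^ 2 * y) (Set.Ioc a b) :=
    (((hv'c.pow 2).mul (continuousOn_id)).integrableOn_Icc).mono_set Set.Ioc_subset_Icc_self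
  have hint2 : IntegrableOn F' (Set.Ioc a b) := hIF'.1
  have hintrhs : IntegrableOn (fun y => 2 * F' y + 4 * ((deriv v y) ^ 2 * y))
      (Set.Ioc a b) := (hint2.const_mul 2).add (hint3.const_mul 4)
  have hpt : ∀ y ∈ Set.Ioc a b, (v y) ^ 2 * G' y ≤ 2 * F' y + 4 * ((deriv v y) ^ 2 * y) := by
    intro y hy
    have hy' : y ∈ Set.Icc a b := Set.Ioc_subset_Icc_self hy
    have h1 := hGsq y hy'
    have h2 := hG'pos y hy'
    have h3 := sq_nonneg (v y * G' y + 2 * deriv v y * G y)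
    simp only [hF']
    nlinarith [sq_nonneg (v y * G' y + 2 * deriv v y * G y), mul_pos h2 h2]
  calc ∫ y in Set.Ioc a b, (v y) ^ 2 * G' y
      ≤ ∫ y in Set.Ioc a b, (2 * F' y + 4 * ((deriv v y) ^ 2 * y)) :=
        setIntegral_mono_on hint1 hintrhs measurableSet_Ioc hpt
    _ = 2 * ((v b) ^ 2 * G b - (v a) ^ 2 * G a)
        + 4 * ∫ y in Set.Ioc a b, (deriv v y) ^ 2 * y := by
        rw [integral_add (hint2.const_mul 2) (hint3.const_mul 4),
          integral_const_mul, integral_const_mul, hFset]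


/-- Logarithmic Hardy inequality: there is a universal `C > 0` such that for every
`R > 2` and every radially symmetric `v ∈ Ḣ¹(ℝ²)`, represented by a `C¹` function of
the radial variable with `∫₀^∞ (v')² y dy < ∞`,
`∫₀^R v²/(y²(1+|log y|)²) y dy ≤ C (∫₁² v² y dy + ∫₀^R (v')² y dy)`. -/
theorem log_hardy_inequality :
    ∃ C : ℝ, 0 < C ∧
      ∀ R : ℝ, 2 < R → ∀ v : ℝ → ℝ,
        ContDiffOn ℝ 1 v (Set.Ioi 0) →
        IntegrableOn (fun y => (deriv v y) ^ 2 * y) (Set.Ioi 0) →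
        (∫ y in Set.Ioc (0:ℝ) R, (v y) ^ 2 / (y ^ 2 * (1 + |Real.log y|) ^ 2) * y)
          ≤ C * ((∫ y in Set.Ioc (1:ℝ) 2, (v y) ^ 2 * y)
              + ∫ y in Set.Ioc (0:ℝ) R, (deriv v y) ^ 2 * y) := by
  refine ⟨16, by norm_num, ?_⟩
  intro R hR v hv hvD
  have hR0 : (0:ℝ) < R := by linarith
  have hop : IsOpen (Set.Ioi (0:ℝ)) := isOpen_Ioi
  have hvd : ∀ y ∈ Set.Ioi (0:ℝ), HasDerivAt v (deriv v y) y := fun y hy =>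
    ((hv.differentiableOn one_ne_zero).differentiableAt (hop.mem_nhds hy)).hasDerivAt
  have hvc : ContinuousOn v (Set.Ioi 0) := hv.continuousOn
  have hv'c : ContinuousOn (deriv v) (Set.Ioi 0) :=
    hv.continuousOn_deriv_of_isOpen hop le_rfl
  set A := ∫ y in Set.Ioc (1:ℝ) 2, (v y) ^ 2 * y with hA
  set D := ∫ y in Set.Ioc (0:ℝ) R, (deriv v y) ^ 2 * y with hD
  have hDint : IntegrableOn (fun y => (deriv v y) ^ 2 * y) (Set.Ioc 0 R) :=
    hvD.mono_set Set.Ioc_subset_Ioi_self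
  have hAnn : 0 ≤ A := setIntegral_nonneg measurableSet_Ioc
    (fun y hy => mul_nonneg (sq_nonneg _) (by linarith [hy.1]))
  have hDnn : 0 ≤ D := setIntegral_nonneg measurableSet_Ioc
    (fun y hy => mul_nonneg (sq_nonneg _) hy.1.le)
  -- integrability of v'^2*y and of v^2*y etc. on compact subsets of Ioi 0
  have hIccsub : ∀ {a b : ℝ}, 0 < a → Set.Icc a b ⊆ Set.Ioi 0 := by
    intro a b ha y hy
    exact lt_of_lt_of_le ha hy.1
  -- D12 : ∫ over Ioc 1 2 of v'^2 * y ≤ D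
  have hmonoD : ∀ {a b : ℝ}, 0 < a → b ≤ R →
      ∫ y in Set.Ioc a b, (deriv v y) ^ 2 * y ≤ D := by
    intro a b ha hb
    refine setIntegral_mono_set hDint ?_ ?_
    · filter_upwards [ae_restrict_mem measurableSet_Ioc] with y hy
      exact mul_nonneg (sq_nonneg _) hy.1.le
    · refine Filter.Eventually.of_forall ?_
      intro y hy
      exact ⟨lt_trans ha hy.1, le_trans hy.2 hb⟩
  -- Step 1 : v 1 ^ 2 ≤ 2 * A + D
  have hv1 : (v 1) ^ 2 ≤ 2 * A + D := by
    -- pointwise bound for t ∈ Icc 1 2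
    have hpt : ∀ t ∈ Set.Icc (1:ℝ) 2, (v 1) ^ 2 ≤ (v t) ^ 2 + (A + D) := by
      intro t ht
      have h1t : (1:ℝ) ≤ t := ht.1
      have hIcc : Set.Icc (1:ℝ) t ⊆ Set.Ioi 0 := hIccsub one_pos
      have hftc : ∫ s in (1:ℝ)..t, 2 * v s * deriv v s = (v t) ^ 2 - (v 1) ^ 2 := by
        refine intervalIntegral.integral_eq_sub_of_hasDerivAt (f := fun s => (v s) ^ 2) ?_ ?_
        · intro s hs
          rw [Set.uIcc_of_le h1t] at hs
          have := (hvd s (hIcc hs)).pow 2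
          exact this.congr_deriv (by norm_num <;> ring)
        · apply ContinuousOn.intervalIntegrable
          rw [Set.uIcc_of_le h1t]
          exact (continuousOn_const.mul (hvc.mono hIcc)).mul (hv'c.mono hIcc)
      have habs : |∫ s in (1:ℝ)..t, 2 * v s * deriv v s| ≤
          ∫ s in Set.Ioc (1:ℝ) t, |2 * v s * deriv v s| := by
        rw [← intervalIntegral.integral_of_le h1t]
        exact intervalIntegral.abs_integral_le_integral_abs h1t
      have hint12 : IntegrableOn (fun s => |2 * v s * deriv v s|) (Set.Ioc 1 2) := by
        refine (ContinuousOn.integrableOn_Icc ?_).mono_set Set.Ioc_subset_Icc_self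
        exact ((continuousOn_const.mul (hvc.mono (hIccsub one_pos))).mul
          (hv'c.mono (hIccsub one_pos))).abs
      have hintsum : IntegrableOn (fun s => ((v s) ^ 2 + (deriv v s) ^ 2) * s)
          (Set.Ioc 1 2) := by
        refine (ContinuousOn.integrableOn_Icc ?_).mono_set Set.Ioc_subset_Icc_self
        exact (((hvc.mono (hIccsub one_pos)).pow 2).add
          ((hv'c.mono (hIccsub one_pos)).pow 2)).mul continuousOn_id
      have hchain : ∫ s in Set.Ioc (1:ℝ) t, |2 * v s * deriv v s| ≤ A + D := by
        calc ∫ s in Set.Ioc (1:ℝ) t, |2 * v s * deriv v s|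
            ≤ ∫ s in Set.Ioc (1:ℝ) 2, |2 * v s * deriv v s| := by
              refine setIntegral_mono_set hint12 ?_ ?_
              · filter_upwards [ae_restrict_mem measurableSet_Ioc] with s _
                exact abs_nonneg _
              · exact Filter.Eventually.of_forall
                  (Set.Ioc_subset_Ioc le_rfl ht.2)
          _ ≤ ∫ s in Set.Ioc (1:ℝ) 2, ((v s) ^ 2 + (deriv v s) ^ 2) * s := by
              refine setIntegral_mono_on hint12 hintsum measurableSet_Ioc ?_
              intro s hs
              have h1 : (1:ℝ) ≤ s := hs.1.le
              rw [abs_le]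
              constructor <;> nlinarith [sq_nonneg (v s + deriv v s),
                sq_nonneg (v s - deriv v s), sq_nonneg (v s), sq_nonneg (deriv v s)]
          _ ≤ A + D := by
              have hsplit : ∫ s in Set.Ioc (1:ℝ) 2, ((v s) ^ 2 + (deriv v s) ^ 2) * s
                  = A + ∫ s in Set.Ioc (1:ℝ) 2, (deriv v s) ^ 2 * s := by
                rw [hA]
                rw [← integral_add]
                · congr 1
                  ext s
                  ring
                · refine (ContinuousOn.integrableOn_Icc ?_).mono_set Set.Ioc_subset_Icc_self
                  exact ((hvc.mono (hIccsub one_pos)).pow 2).mul continuousOn_id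
                · refine (ContinuousOn.integrableOn_Icc ?_).mono_set Set.Ioc_subset_Icc_self
                  exact ((hv'c.mono (hIccsub one_pos)).pow 2).mul continuousOn_id
              rw [hsplit]
              have := hmonoD one_pos (by linarith : (2:ℝ) ≤ R)
              linarith
      have := hftc
      nlinarith [le_trans habs hchain, abs_le.mp (le_trans habs hchain),
        neg_abs_le (∫ s in (1:ℝ)..t, 2 * v s * deriv v s),
        le_abs_self (∫ s in (1:ℝ)..t, 2 * v s * deriv v s)]
    -- integrate the pointwise bound over Ioc 1 2
    have hconst : ∫ (_ : ℝ) in Set.Ioc (1:ℝ) 2, (v 1) ^ 2 = (v 1) ^ 2 := by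
      rw [setIntegral_const]
      rw [measureReal_def, Real.volume_Ioc]
      norm_num
    have hintv2 : IntegrableOn (fun t => (v t) ^ 2) (Set.Ioc 1 2) :=
      (ContinuousOn.integrableOn_Icc ((hvc.mono (hIccsub one_pos)).pow 2)).mono_set
        Set.Ioc_subset_Icc_self
    have hmono2 : ∫ (_ : ℝ) in Set.Ioc (1:ℝ) 2, (v 1) ^ 2
        ≤ ∫ t in Set.Ioc (1:ℝ) 2, ((v t) ^ 2 + (A + D)) := by
      refine setIntegral_mono_on (integrableOn_const (by simp [Real.volume_Ioc]))
        (hintv2.add (integrableOn_const (by simp [Real.volume_Ioc])))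
        measurableSet_Ioc ?_
      intro t ht
      exact hpt t (Set.Ioc_subset_Icc_self ht)
    have hsplit2 : ∫ t in Set.Ioc (1:ℝ) 2, ((v t) ^ 2 + (A + D))
        = (∫ t in Set.Ioc (1:ℝ) 2, (v t) ^ 2) + (A + D) := by
      rw [integral_add hintv2 (integrableOn_const (by simp [Real.volume_Ioc]))]
      congr 1
      rw [setIntegral_const]
      rw [measureReal_def, Real.volume_Ioc]
      norm_num
    have hv2A : ∫ t in Set.Ioc (1:ℝ) 2, (v t) ^ 2 ≤ A := by
      rw [hA]
      refine setIntegral_mono_on hintv2 ?_ measurableSet_Ioc ?_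
      · refine (ContinuousOn.integrableOn_Icc ?_).mono_set Set.Ioc_subset_Icc_self
        exact ((hvc.mono (hIccsub one_pos)).pow 2).mul continuousOn_id
      · intro t ht
        nlinarith [sq_nonneg (v t), ht.1.le]
    rw [hconst] at hmono2
    rw [hsplit2] at hmono2
    linarith
  -- the integrand
  set f : ℝ → ℝ := fun y => (v y) ^ 2 / (y ^ 2 * (1 + |Real.log y|) ^ 2) * y with hf
  have hwpos : ∀ y : ℝ, 0 < y → 0 < y ^ 2 * (1 + |Real.log y|) ^ 2 := by
    intro y hy
    have : (0:ℝ) < 1 + |Real.log y| := by positivity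
    positivity
  have hfc : ContinuousOn f (Set.Ioi 0) := by
    refine ContinuousOn.mul (ContinuousOn.div (hvc.pow 2) ?_ ?_) continuousOn_id
    · refine ContinuousOn.mul (continuousOn_pow 2) ?_
      refine (continuousOn_const.add ?_).pow 2
      exact (Real.continuousOn_log.mono (fun y hy => ne_of_gt hy)).abs
    · intro y hy
      exact ne_of_gt (hwpos y hy)
  have hfnn : ∀ y ∈ Set.Ioi (0:ℝ), 0 ≤ f y := by
    intro y hy
    exact mul_nonneg (div_nonneg (sq_nonneg _) (hwpos y hy).le) (le_of_lt hy)
  -- Step 2 : on Ioc ε 1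
  have hstep2 : ∀ n : ℕ, ∫ y in Set.Ioc (((n:ℝ)+2)⁻¹) 1, f y ≤ 2 * (v 1) ^ 2 + 4 * D := by
    intro n
    set ε : ℝ := ((n:ℝ)+2)⁻¹ with hε
    have hε0 : 0 < ε := by positivity
    have hε1 : ε ≤ 1 := by
      rw [hε]
      rw [inv_le_one_iff₀]
      right
      have : (0:ℝ) ≤ (n:ℝ) := Nat.cast_nonneg n
      linarith
    have hIcc : Set.Icc ε 1 ⊆ Set.Ioi 0 := hIccsub hε0
    have hlogfacts : ∀ y ∈ Set.Icc ε (1:ℝ), 0 < 1 - Real.log y := by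
      intro y hy
      have := Real.log_nonpos (lt_of_lt_of_le hε0 hy.1).le hy.2
      linarith
    set G : ℝ → ℝ := fun y => (1 - Real.log y)⁻¹ with hG
    set G' : ℝ → ℝ := fun y => (y * (1 - Real.log y) ^ 2)⁻¹ with hG'
    have hGd : ∀ y ∈ Set.Icc ε 1, HasDerivAt G (G' y) y := by
      intro y hy
      have hy0 : 0 < y := lt_of_lt_of_le hε0 hy.1
      have h1 : HasDerivAt (fun t => 1 - Real.log t) (-(1/y)) y := by
        simpa using (Real.hasDerivAt_log (ne_of_gt hy0)).const_sub 1
      have h2 := h1.inv (ne_of_gt (hlogfacts y hy))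
      refine h2.congr_deriv ?_
      rw [hG']
      field_simp
    have hGsq : ∀ y ∈ Set.Icc ε 1, G y ^ 2 = G' y * y := by
      intro y hy
      have hy0 : 0 < y := lt_of_lt_of_le hε0 hy.1
      have hyne : y ≠ 0 := ne_of_gt hy0
      show ((1 - Real.log y)⁻¹) ^ 2 = (y * (1 - Real.log y) ^ 2)⁻¹ * y
      rw [mul_inv, ← inv_pow, mul_comm, ← mul_assoc, mul_inv_cancel₀ hyne, one_mul]
    have hG'pos : ∀ y ∈ Set.Icc ε 1, 0 < G' y := by
      intro y hy
      have hy0 : 0 < y := lt_of_lt_of_le hε0 hy.1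
      have := hlogfacts y hy
      rw [hG']
      positivity
    have hGc : ContinuousOn G (Set.Icc ε 1) := by
      refine ContinuousOn.inv₀ ?_ (fun y hy => ne_of_gt (hlogfacts y hy))
      exact continuousOn_const.sub (Real.continuousOn_log.mono
        (fun y hy => ne_of_gt (lt_of_lt_of_le hε0 hy.1)))
    have hG'cont : ContinuousOn G' (Set.Icc ε 1) := by
      refine ContinuousOn.inv₀ ?_ ?_
      · exact continuousOn_id.mul ((continuousOn_const.sub (Real.continuousOn_log.mono
          (fun y hy => ne_of_gt (lt_of_lt_of_le hε0 hy.1)))).pow 2)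
      · intro y hy
        have hy0 : 0 < y := lt_of_lt_of_le hε0 hy.1
        have := hlogfacts y hy
        positivity
    have hcore := core_ineq hε1 (fun y hy => hvd y (hIcc hy)) (hvc.mono hIcc)
      (hv'c.mono hIcc) hGd hGc hG'cont hGsq hG'pos
    -- identify f with v² G' on Ioc ε 1
    have hfeq : ∫ y in Set.Ioc ε 1, f y = ∫ y in Set.Ioc ε 1, (v y) ^ 2 * G' y := by
      refine setIntegral_congr_fun measurableSet_Ioc ?_
      intro y hy
      have hy' : y ∈ Set.Icc ε 1 := Set.Ioc_subset_Icc_self hy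
      have hy0 : 0 < y := lt_of_lt_of_le hε0 hy'.1
      have hlog : |Real.log y| = -Real.log y :=
        abs_of_nonpos (Real.log_nonpos hy0.le hy'.2)
      have hd := hlogfacts y hy'
      have hyne : y ≠ 0 := ne_of_gt hy0
      have hLne : (1 - Real.log y) ≠ 0 := ne_of_gt hd
      show (v y) ^ 2 / (y ^ 2 * (1 + |Real.log y|) ^ 2) * y
          = (v y) ^ 2 * (y * (1 - Real.log y) ^ 2)⁻¹
      rw [hlog, show (1:ℝ) + -Real.log y = 1 - Real.log y from by ring]
      have hden : y ^ 2 * (1 - Real.log y) ^ 2 ≠ 0 :=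
        mul_ne_zero (pow_ne_zero 2 hyne) (pow_ne_zero 2 hLne)
      rw [div_mul_eq_mul_div, div_eq_iff hden, mul_assoc,
        show (y * (1 - Real.log y) ^ 2)⁻¹ * (y ^ 2 * (1 - Real.log y) ^ 2) = y from by
          rw [show y ^ 2 * (1 - Real.log y) ^ 2 = (y * (1 - Real.log y) ^ 2) * y from by ring,
            ← mul_assoc, inv_mul_cancel₀ (mul_ne_zero hyne (pow_ne_zero 2 hLne)), one_mul]]
    -- boundary terms
    have hG1 : G 1 = 1 := by rw [hG]; simp
    have hGε : 0 ≤ G ε := by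
      have := hlogfacts ε ⟨le_rfl, hε1⟩
      rw [hG]
      positivity
    have hDε : ∫ y in Set.Ioc ε 1, (deriv v y) ^ 2 * y ≤ D :=
      hmonoD hε0 (by linarith)
    rw [hfeq]
    calc ∫ y in Set.Ioc ε 1, (v y) ^ 2 * G' y
        ≤ 2 * ((v 1) ^ 2 * G 1 - (v ε) ^ 2 * G ε)
          + 4 * ∫ y in Set.Ioc ε 1, (deriv v y) ^ 2 * y := hcore
      _ ≤ 2 * (v 1) ^ 2 + 4 * D := by
          rw [hG1]
          nlinarith [sq_nonneg (v ε), mul_nonneg (sq_nonneg (v ε)) hGε]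
  -- Step 3 : Ioc 0 1
  obtain ⟨hint01, hbound01⟩ := int_Ioc01_le hfc hfnn hstep2
  -- Step 4 : Ioc 1 R
  have hstep4 : ∫ y in Set.Ioc (1:ℝ) R, f y ≤ 2 * (v 1) ^ 2 + 4 * D := by
    have h1R : (1:ℝ) ≤ R := by linarith
    have hIcc : Set.Icc (1:ℝ) R ⊆ Set.Ioi 0 := hIccsub one_pos
    have hlogfacts : ∀ y ∈ Set.Icc (1:ℝ) R, 0 < 1 + Real.log y := by
      intro y hy
      have := Real.log_nonneg hy.1
      linarith
    set G : ℝ → ℝ := fun y => -(1 + Real.log y)⁻¹ with hG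
    set G' : ℝ → ℝ := fun y => (y * (1 + Real.log y) ^ 2)⁻¹ with hG'
    have hGd : ∀ y ∈ Set.Icc (1:ℝ) R, HasDerivAt G (G' y) y := by
      intro y hy
      have hy0 : 0 < y := lt_of_lt_of_le one_pos hy.1
      have h1 : HasDerivAt (fun t => 1 + Real.log t) (1/y) y := by
        simpa using (Real.hasDerivAt_log (ne_of_gt hy0)).const_add 1
      have h2 := (h1.inv (ne_of_gt (hlogfacts y hy))).neg
      refine h2.congr_deriv ?_
      rw [hG']
      field_simp
    have hGsq : ∀ y ∈ Set.Icc (1:ℝ) R, G y ^ 2 = G' y * y := by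
      intro y hy
      have hy0 : 0 < y := lt_of_lt_of_le one_pos hy.1
      have hyne : y ≠ 0 := ne_of_gt hy0
      show (-(1 + Real.log y)⁻¹) ^ 2 = (y * (1 + Real.log y) ^ 2)⁻¹ * y
      rw [neg_pow, mul_inv, ← inv_pow, mul_comm (y⁻¹), mul_assoc, inv_mul_cancel₀ hyne,
        mul_one]
      norm_num
    have hG'pos : ∀ y ∈ Set.Icc (1:ℝ) R, 0 < G' y := by
      intro y hy
      have hy0 : 0 < y := lt_of_lt_of_le one_pos hy.1
      have := hlogfacts y hy
      rw [hG']
      positivity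
    have hGc : ContinuousOn G (Set.Icc (1:ℝ) R) := by
      refine ContinuousOn.neg ?_
      refine ContinuousOn.inv₀ ?_ (fun y hy => ne_of_gt (hlogfacts y hy))
      exact continuousOn_const.add (Real.continuousOn_log.mono
        (fun y hy => ne_of_gt (lt_of_lt_of_le one_pos hy.1)))
    have hG'cont : ContinuousOn G' (Set.Icc (1:ℝ) R) := by
      refine ContinuousOn.inv₀ ?_ ?_
      · exact continuousOn_id.mul ((continuousOn_const.add (Real.continuousOn_log.mono
          (fun y hy => ne_of_gt (lt_of_lt_of_le one_pos hy.1)))).pow 2)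
      · intro y hy
        have hy0 : 0 < y := lt_of_lt_of_le one_pos hy.1
        have := hlogfacts y hy
        positivity
    have hcore := core_ineq h1R (fun y hy => hvd y (hIcc hy)) (hvc.mono hIcc)
      (hv'c.mono hIcc) hGd hGc hG'cont hGsq hG'pos
    have hfeq : ∫ y in Set.Ioc (1:ℝ) R, f y = ∫ y in Set.Ioc (1:ℝ) R, (v y) ^ 2 * G' y := by
      refine setIntegral_congr_fun measurableSet_Ioc ?_
      intro y hy
      have hy' : y ∈ Set.Icc (1:ℝ) R := Set.Ioc_subset_Icc_self hy
      have hy0 : 0 < y := lt_of_lt_of_le one_pos hy'.1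
      have hlog : |Real.log y| = Real.log y := abs_of_nonneg (Real.log_nonneg hy'.1)
      have hd := hlogfacts y hy'
      have hyne : y ≠ 0 := ne_of_gt hy0
      have hLne : (1 + Real.log y) ≠ 0 := ne_of_gt hd
      show (v y) ^ 2 / (y ^ 2 * (1 + |Real.log y|) ^ 2) * y
          = (v y) ^ 2 * (y * (1 + Real.log y) ^ 2)⁻¹
      rw [hlog]
      have hden : y ^ 2 * (1 + Real.log y) ^ 2 ≠ 0 :=
        mul_ne_zero (pow_ne_zero 2 hyne) (pow_ne_zero 2 hLne)
      rw [div_mul_eq_mul_div, div_eq_iff hden, mul_assoc,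
        show (y * (1 + Real.log y) ^ 2)⁻¹ * (y ^ 2 * (1 + Real.log y) ^ 2) = y from by
          rw [show y ^ 2 * (1 + Real.log y) ^ 2 = (y * (1 + Real.log y) ^ 2) * y from by ring,
            ← mul_assoc, inv_mul_cancel₀ (mul_ne_zero hyne (pow_ne_zero 2 hLne)), one_mul]]
    have hG1 : G 1 = -1 := by rw [hG]; simp
    have hGR : G R ≤ 0 := by
      have := hlogfacts R ⟨h1R, le_rfl⟩
      rw [hG]
      simp only [neg_nonpos]
      positivity
    have hDR : ∫ y in Set.Ioc (1:ℝ) R, (deriv v y) ^ 2 * y ≤ D :=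
      hmonoD one_pos le_rfl
    rw [hfeq]
    calc ∫ y in Set.Ioc (1:ℝ) R, (v y) ^ 2 * G' y
        ≤ 2 * ((v R) ^ 2 * G R - (v 1) ^ 2 * G 1)
          + 4 * ∫ y in Set.Ioc (1:ℝ) R, (deriv v y) ^ 2 * y := hcore
      _ ≤ 2 * (v 1) ^ 2 + 4 * D := by
          rw [hG1]
          nlinarith [mul_nonpos_of_nonneg_of_nonpos (sq_nonneg (v R)) hGR]
  -- integrability of f on Ioc 1 R
  have hint1R : IntegrableOn f (Set.Ioc 1 R) :=
    (ContinuousOn.integrableOn_Icc (hfc.mono (hIccsub one_pos))).mono_set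
      Set.Ioc_subset_Icc_self
  -- combine
  have hunion : Set.Ioc (0:ℝ) 1 ∪ Set.Ioc (1:ℝ) R = Set.Ioc (0:ℝ) R :=
    Set.Ioc_union_Ioc_eq_Ioc (by norm_num) (by linarith)
  have hsplit : ∫ y in Set.Ioc (0:ℝ) R, f y
      = (∫ y in Set.Ioc (0:ℝ) 1, f y) + ∫ y in Set.Ioc (1:ℝ) R, f y := by
    rw [← hunion]
    exact setIntegral_union (Set.Ioc_disjoint_Ioc_of_le le_rfl) measurableSet_Ioc hint01 hint1R
  have hfinal : ∫ y in Set.Ioc (0:ℝ) R, f y ≤ 4 * (v 1) ^ 2 + 8 * D := by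
    rw [hsplit]
    linarith
  show (∫ y in Set.Ioc (0:ℝ) R, f y) ≤ 16 * (A + D)
  linarith
end
end

section
/- (Weighted logarithmic Hardy inequality with sharp constant.) For every γ > 0 there exists a constant C_γ > 0 such that for every R > 2 and every C¹ function v on (0,∞) for which the right-hand side is finite: (γ²/4)·∫₁^R |v(y)|²/(y^{2+γ}(1+log y)²) · y dy ≤ C_γ·∫₁² |v(y)|² y dy + ∫₁^R |v'(y)|²/(y^{γ}(1+log y)²) · y dy. -/
open MeasureTheory Real Set

noncomputable section

/-- Continuity of the weighted integrands on sets of points `≥ 1`. -/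
private lemma hardy_contOn_integrand (c : ℝ) {f : ℝ → ℝ} {s : Set ℝ} (hs : s ⊆ Ici 1)
    (hf : ContinuousOn f s) :
    ContinuousOn (fun y => (f y) ^ 2 / (y ^ c * (1 + Real.log y) ^ 2) * y) s := by
  have hlog : ContinuousOn Real.log s := by
    apply Real.continuousOn_log.mono
    intro y hy
    have h1 : (1:ℝ) ≤ y := hs hy
    simp only [mem_compl_iff, mem_singleton_iff]
    intro h; rw [h] at h1; norm_num at h1
  refine ContinuousOn.mul ?_ continuousOn_id
  refine ContinuousOn.div (hf.pow 2) ?_ ?_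
  · exact (ContinuousOn.rpow_const continuousOn_id
      (fun y hy => Or.inl (by have h1 : (1:ℝ) ≤ y := hs hy; show id y ≠ 0; simp only [id_eq]; intro h; rw [h] at h1; norm_num at h1))).mul
      ((continuousOn_const.add hlog).pow 2)
  · intro y hy
    have h1 : (1:ℝ) ≤ y := hs hy
    have h0 : (0:ℝ) < y := lt_of_lt_of_le one_pos h1
    have hl : 0 ≤ Real.log y := Real.log_nonneg h1
    have := Real.rpow_pos_of_pos h0 c
    have h2 : (0:ℝ) < (1 + Real.log y) ^ 2 := by positivity
    exact ne_of_gt (mul_pos this h2)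

set_option maxHeartbeats 2000000 in
/-- Weighted logarithmic Hardy inequality with sharp constant: for every `γ > 0` there is
`C_γ > 0` such that for every `R > 2` and every `C¹` function `v` on `(0,∞)`,
`(γ²/4) ∫₁^R v²/(y^{2+γ}(1+log y)²) y dy
  ≤ C_γ ∫₁² v² y dy + ∫₁^R (v')²/(y^γ(1+log y)²) y dy`. -/
theorem weighted_log_hardy_inequality :
    ∀ γ : ℝ, 0 < γ →
      ∃ C : ℝ, 0 < C ∧
        ∀ R : ℝ, 2 < R → ∀ v : ℝ → ℝ,
          ContDiffOn ℝ 1 v (Set.Ioi 0) →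
          γ ^ 2 / 4 *
              (∫ y in Set.Ioc (1:ℝ) R,
                (v y) ^ 2 / (y ^ (2 + γ) * (1 + Real.log y) ^ 2) * y)
            ≤ C * (∫ y in Set.Ioc (1:ℝ) 2, (v y) ^ 2 * y)
              + ∫ y in Set.Ioc (1:ℝ) R,
                  (deriv v y) ^ 2 / (y ^ γ * (1 + Real.log y) ^ 2) * y := by
  intro γ hγ
  have h2γpos : (0:ℝ) < 2 ^ γ := Real.rpow_pos_of_pos two_pos γ
  set ε : ℝ := 2 * γ * 2 ^ γ with hεdef
  have hεpos : 0 < ε := by positivity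
  refine ⟨γ ^ 2 / 4 + γ / 2 * (1 + ε), by positivity, ?_⟩
  intro R hR v hv
  have h12 : (1:ℝ) ≤ 2 := by norm_num
  have h2R : (2:ℝ) ≤ R := hR.le
  have h1R : (1:ℝ) ≤ R := by linarith
  -- continuity of v and deriv v
  have hvc : ContinuousOn v (Ioi 0) := hv.continuousOn
  have hdvc : ContinuousOn (deriv v) (Ioi 0) := hv.continuousOn_deriv_of_isOpen isOpen_Ioi le_rfl
  have hIcc1R : Icc (1:ℝ) R ⊆ Ioi 0 := fun y hy => lt_of_lt_of_le one_pos hy.1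
  have hIcc12 : Icc (1:ℝ) 2 ⊆ Ioi 0 := fun y hy => lt_of_lt_of_le one_pos hy.1
  have hIcc2R : Icc (2:ℝ) R ⊆ Ioi 0 := fun y hy => lt_of_lt_of_le two_pos hy.1
  have hdv : ∀ y : ℝ, 0 < y → HasDerivAt v (deriv v y) y := by
    intro y hy
    exact ((hv.differentiableOn one_ne_zero).differentiableAt (isOpen_Ioi.mem_nhds hy)).hasDerivAt
  -- integrands
  set A : ℝ → ℝ := fun y => (v y) ^ 2 / (y ^ (2 + γ) * (1 + Real.log y) ^ 2) * y with hA
  set B : ℝ → ℝ := fun y => (deriv v y) ^ 2 / (y ^ γ * (1 + Real.log y) ^ 2) * y with hB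
  -- integrability
  have hAint1R : IntegrableOn A (Ioc 1 R) :=
    ((hardy_contOn_integrand (2+γ) (fun y hy => hy.1) (hvc.mono hIcc1R)).integrableOn_Icc).mono_set
      Ioc_subset_Icc_self
  have hAint12 : IntegrableOn A (Ioc 1 2) :=
    ((hardy_contOn_integrand (2+γ) (fun y hy => hy.1) (hvc.mono hIcc12)).integrableOn_Icc).mono_set
      Ioc_subset_Icc_self
  have hAint2R : IntegrableOn A (Ioc 2 R) :=
    ((hardy_contOn_integrand (2+γ) (fun y hy => le_trans h12 hy.1) (hvc.mono hIcc2R)).integrableOn_Icc).mono_set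
      Ioc_subset_Icc_self
  have hBint1R : IntegrableOn B (Ioc 1 R) :=
    ((hardy_contOn_integrand γ (fun y hy => hy.1) (hdvc.mono hIcc1R)).integrableOn_Icc).mono_set
      Ioc_subset_Icc_self
  have hBint12 : IntegrableOn B (Ioc 1 2) :=
    ((hardy_contOn_integrand γ (fun y hy => hy.1) (hdvc.mono hIcc12)).integrableOn_Icc).mono_set
      Ioc_subset_Icc_self
  have hBint2R : IntegrableOn B (Ioc 2 R) :=
    ((hardy_contOn_integrand γ (fun y hy => le_trans h12 hy.1) (hdvc.mono hIcc2R)).integrableOn_Icc).mono_set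
      Ioc_subset_Icc_self
  have hv2yint : IntegrableOn (fun y => (v y) ^ 2 * y) (Ioc 1 2) :=
    (((hvc.mono hIcc12).pow 2).mul continuousOn_id).integrableOn_Icc.mono_set Ioc_subset_Icc_self
  have hv2int : IntegrableOn (fun y => (v y) ^ 2) (Ioc 1 2) :=
    ((hvc.mono hIcc12).pow 2).integrableOn_Icc.mono_set Ioc_subset_Icc_self
  have hdv2int : IntegrableOn (fun y => (deriv v y) ^ 2) (Ioc 1 2) :=
    ((hdvc.mono hIcc12).pow 2).integrableOn_Icc.mono_set Ioc_subset_Icc_self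
  -- split the integrals at 2
  have hsplitA : ∫ y in Ioc (1:ℝ) R, A y = (∫ y in Ioc (1:ℝ) 2, A y) + ∫ y in Ioc (2:ℝ) R, A y := by
    rw [← Ioc_union_Ioc_eq_Ioc h12 h2R]
    exact setIntegral_union (Set.Ioc_disjoint_Ioc_of_le le_rfl) measurableSet_Ioc hAint12 hAint2R
  have hsplitB : ∫ y in Ioc (1:ℝ) R, B y = (∫ y in Ioc (1:ℝ) 2, B y) + ∫ y in Ioc (2:ℝ) R, B y := by
    rw [← Ioc_union_Ioc_eq_Ioc h12 h2R]
    exact setIntegral_union (Set.Ioc_disjoint_Ioc_of_le le_rfl) measurableSet_Ioc hBint12 hBint2R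
  -- Step 2 : on (1,2], A ≤ v² y
  have step2 : ∫ y in Ioc (1:ℝ) 2, A y ≤ ∫ y in Ioc (1:ℝ) 2, (v y) ^ 2 * y := by
    refine setIntegral_mono_on hAint12 hv2yint measurableSet_Ioc ?_
    intro y hy
    have h1y : (1:ℝ) < y := hy.1
    have h0y : (0:ℝ) < y := by linarith
    have hl : 0 ≤ Real.log y := Real.log_nonneg h1y.le
    have hD : 1 ≤ y ^ (2 + γ) * (1 + Real.log y) ^ 2 := by
      have h1 : (1:ℝ) ≤ y ^ (2 + γ) := Real.one_le_rpow h1y.le (by linarith)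
      nlinarith
    have hDpos : 0 < y ^ (2 + γ) * (1 + Real.log y) ^ 2 := by linarith
    have : (v y) ^ 2 / (y ^ (2 + γ) * (1 + Real.log y) ^ 2) ≤ (v y) ^ 2 :=
      div_le_self (sq_nonneg _) hD
    simp only [hA]
    exact mul_le_mul_of_nonneg_right this h0y.le

  -- the weight and auxiliary functions for the main Hardy step on (2,R]
  set W : ℝ → ℝ := fun y => y ^ γ * (1 + Real.log y) ^ 2 with hWdef
  set φ : ℝ → ℝ := fun y =>
    (-γ * v y * deriv v y) / W y + (γ ^ 2 / 2 * (v y) ^ 2) / (W y * y)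
      + (γ * (v y) ^ 2) / (W y * (1 + Real.log y) * y) with hφdef
  set F : ℝ → ℝ := fun y => -(γ / 2) * (v y) ^ 2 / W y with hFdef
  have hWpos : ∀ y : ℝ, 1 ≤ y → 0 < W y := by
    intro y hy
    have h0 : (0:ℝ) < y := lt_of_lt_of_le one_pos hy
    have hl : 0 ≤ Real.log y := Real.log_nonneg hy
    have := Real.rpow_pos_of_pos h0 γ
    have h2 : (0:ℝ) < (1 + Real.log y) ^ 2 := by positivity
    exact mul_pos this h2
  -- derivative of F
  have hFderiv : ∀ y ∈ Icc (2:ℝ) R, HasDerivAt F (φ y) y := by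
    intro y hy
    have h2y : (2:ℝ) ≤ y := hy.1
    have h0 : (0:ℝ) < y := by linarith
    have h1y : (1:ℝ) ≤ y := by linarith
    have hl : 0 ≤ Real.log y := Real.log_nonneg h1y
    have hLpos : (0:ℝ) < 1 + Real.log y := by linarith
    have hXpos : (0:ℝ) < y ^ γ := Real.rpow_pos_of_pos h0 γ
    have hu : HasDerivAt W
        (γ * y ^ (γ - 1) * (1 + Real.log y) ^ 2 + y ^ γ * ((2:ℕ) * (1 + Real.log y) ^ 1 * y⁻¹)) y := by
      exact (Real.hasDerivAt_rpow_const (Or.inl h0.ne')).mul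
        (((Real.hasDerivAt_log h0.ne').const_add 1).pow 2)
    have hnum : HasDerivAt (fun y => -(γ / 2) * (v y) ^ 2)
        (-(γ / 2) * ((2:ℕ) * (v y) ^ 1 * deriv v y)) y := ((hdv y h0).pow 2).const_mul (-(γ / 2))
    have hWne : W y ≠ 0 := (hWpos y h1y).ne'
    have hdivF := hnum.div hu hWne
    refine hdivF.congr_deriv ?_
    have hy1 : y ^ (γ - 1) = y ^ γ / y := by rw [Real.rpow_sub h0, Real.rpow_one]
    simp only [hφdef, hWdef, hy1]
    push_cast
    field_simp
    ring
  -- continuity facts on Icc 2 R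
  have hlog2R : ContinuousOn Real.log (Icc (2:ℝ) R) := by
    apply Real.continuousOn_log.mono
    intro y hy
    simp only [mem_compl_iff, mem_singleton_iff]
    have := hy.1; intro h; rw [h] at this; norm_num at this
  have hWc : ContinuousOn W (Icc (2:ℝ) R) := by
    apply ContinuousOn.mul
    · exact ContinuousOn.rpow_const continuousOn_id
        (fun y hy => Or.inl (by have := hy.1; show id y ≠ 0; simp only [id_eq]; intro h; rw [h] at this; norm_num at this))
    · exact (continuousOn_const.add hlog2R).pow 2
  have hWne2R : ∀ y ∈ Icc (2:ℝ) R, W y ≠ 0 := fun y hy => (hWpos y (by linarith [hy.1])).ne'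
  have hLne2R : ∀ y ∈ Icc (2:ℝ) R, (1 + Real.log y) ≠ 0 := by
    intro y hy
    have : 0 ≤ Real.log y := Real.log_nonneg (by linarith [hy.1])
    intro h; linarith
  have hyne2R : ∀ y ∈ Icc (2:ℝ) R, y ≠ 0 := by
    intro y hy; have := hy.1; intro h; rw [h] at this; norm_num at this
  have hφcont : ContinuousOn φ (Icc (2:ℝ) R) := by
    have hvr := hvc.mono hIcc2R
    have hdvr := hdvc.mono hIcc2R
    apply ContinuousOn.add
    apply ContinuousOn.add
    · exact ContinuousOn.div ((continuousOn_const.mul hvr).mul hdvr) hWc hWne2R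
    · exact ContinuousOn.div (continuousOn_const.mul (hvr.pow 2)) (hWc.mul continuousOn_id)
        (fun y hy => mul_ne_zero (hWne2R y hy) (hyne2R y hy))
    · exact ContinuousOn.div (continuousOn_const.mul (hvr.pow 2))
        ((hWc.mul (continuousOn_const.add hlog2R)).mul continuousOn_id)
        (fun y hy => mul_ne_zero (mul_ne_zero (hWne2R y hy) (hLne2R y hy)) (hyne2R y hy))
  have hφint : IntervalIntegrable φ volume 2 R := by
    apply ContinuousOn.intervalIntegrable
    rwa [uIcc_of_le h2R]
  have hφintOn : IntegrableOn φ (Ioc 2 R) :=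
    hφcont.integrableOn_Icc.mono_set Ioc_subset_Icc_self
  -- FTC for F on (2, R]
  have hFTC : ∫ y in Ioc (2:ℝ) R, φ y = F R - F 2 := by
    rw [← intervalIntegral.integral_of_le h2R]
    exact intervalIntegral.integral_eq_sub_of_hasDerivAt
      (fun y hy => hFderiv y (by rwa [uIcc_of_le h2R] at hy)) hφint
  have hFR : F R ≤ 0 := by
    have hW : 0 < W R := hWpos R h1R
    have : -(γ / 2) * (v R) ^ 2 ≤ 0 := by nlinarith [sq_nonneg (v R)]
    exact div_nonpos_of_nonpos_of_nonneg this hW.le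
  have hF2 : -F 2 ≤ γ / 2 * (v 2) ^ 2 := by
    have hW2 : (1:ℝ) ≤ W 2 := by
      have hl2 : 0 ≤ Real.log 2 := Real.log_nonneg one_le_two
      have h1 : (1:ℝ) ≤ (2:ℝ) ^ γ := Real.one_le_rpow one_le_two hγ.le
      have h2 : (1:ℝ) ≤ (1 + Real.log 2) ^ 2 := by nlinarith
      simp only [hWdef]
      nlinarith
    have : -F 2 = (γ / 2 * (v 2) ^ 2) / W 2 := by simp only [hFdef]; ring
    rw [this]
    exact div_le_self (by positivity) hW2
  -- pointwise main inequality on (2, R]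
  have key : ∀ y ∈ Ioc (2:ℝ) R, γ ^ 2 / 4 * A y ≤ B y + φ y := by
    intro y hy
    have h2y : (2:ℝ) < y := hy.1
    have h0 : (0:ℝ) < y := by linarith
    have hl : 0 ≤ Real.log y := Real.log_nonneg (by linarith)
    have hL1 : (1:ℝ) ≤ 1 + Real.log y := by linarith
    have hLpos : (0:ℝ) < 1 + Real.log y := by linarith
    have hXpos : (0:ℝ) < y ^ γ := Real.rpow_pos_of_pos h0 γ
    have h2pow : y ^ (2 + γ) = y ^ 2 * y ^ γ := by
      rw [Real.rpow_add h0]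
      congr 1
      rw [show ((2:ℝ)) = ((2:ℕ):ℝ) by norm_num, Real.rpow_natCast]
    have hid : B y + φ y - γ ^ 2 / 4 * A y =
        ((y * deriv v y - γ / 2 * v y) ^ 2 * (1 + Real.log y) + γ * (v y) ^ 2)
          / (y * y ^ γ * (1 + Real.log y) ^ 3) := by
      simp only [hA, hB, hφdef, hWdef, h2pow]
      field_simp
      ring
    have hnum : 0 ≤ (y * deriv v y - γ / 2 * v y) ^ 2 * (1 + Real.log y) + γ * (v y) ^ 2 := by positivity
    have hden : (0:ℝ) < y * y ^ γ * (1 + Real.log y) ^ 3 := by positivity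
    nlinarith [div_nonneg hnum hden.le, hid]
  -- integrate the main inequality
  have step3 : γ ^ 2 / 4 * (∫ y in Ioc (2:ℝ) R, A y)
      ≤ (∫ y in Ioc (2:ℝ) R, B y) + γ / 2 * (v 2) ^ 2 := by
    have hmono : ∫ y in Ioc (2:ℝ) R, (γ ^ 2 / 4 * A y) ≤ ∫ y in Ioc (2:ℝ) R, (B y + φ y) :=
      setIntegral_mono_on (hAint2R.const_mul _) (hBint2R.add hφintOn) measurableSet_Ioc key
    rw [MeasureTheory.integral_const_mul] at hmono
    rw [MeasureTheory.integral_add hBint2R hφintOn, hFTC] at hmono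
    linarith

  -- trace estimate: v(2)² controlled on (1,2]
  have hGderiv : ∀ s ∈ Set.uIcc (1:ℝ) 2, HasDerivAt (fun s => (s - 1) * (v s) ^ 2)
      ((v s) ^ 2 + (s - 1) * ((2:ℕ) * (v s) ^ 1 * deriv v s)) s := by
    intro s hs
    rw [uIcc_of_le h12] at hs
    have h0 : (0:ℝ) < s := lt_of_lt_of_le one_pos hs.1
    have := ((hasDerivAt_id s).sub_const 1).mul ((hdv s h0).pow 2)
    refine this.congr_deriv ?_
    simp only [id_eq, Pi.pow_apply]; push_cast; ring
  have hGcont : ContinuousOn (fun s : ℝ => (v s) ^ 2 + (s - 1) * ((2:ℕ) * (v s) ^ 1 * deriv v s))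
      (Icc (1:ℝ) 2) := by
    have hvr := hvc.mono hIcc12
    have hdvr := hdvc.mono hIcc12
    exact (hvr.pow 2).add ((continuousOn_id.sub continuousOn_const).mul
      ((continuousOn_const.mul (hvr.pow 1)).mul hdvr))
  have hGint : IntervalIntegrable (fun s : ℝ => (v s) ^ 2 + (s - 1) * ((2:ℕ) * (v s) ^ 1 * deriv v s))
      volume 1 2 := by
    apply ContinuousOn.intervalIntegrable
    rwa [uIcc_of_le h12]
  have htrace0 : (v 2) ^ 2 = ∫ s in (1:ℝ)..2, ((v s) ^ 2 + (s - 1) * ((2:ℕ) * (v s) ^ 1 * deriv v s)) := by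
    rw [intervalIntegral.integral_eq_sub_of_hasDerivAt hGderiv hGint]
    norm_num
  have hmajint : IntervalIntegrable (fun s : ℝ => (1 + ε) * (v s) ^ 2 + 1 / ε * (deriv v s) ^ 2)
      volume 1 2 := by
    apply ContinuousOn.intervalIntegrable
    rw [uIcc_of_le h12]
    exact (continuousOn_const.mul ((hvc.mono hIcc12).pow 2)).add
      (continuousOn_const.mul ((hdvc.mono hIcc12).pow 2))
  have htrace1 : (v 2) ^ 2 ≤ ∫ s in (1:ℝ)..2, ((1 + ε) * (v s) ^ 2 + 1 / ε * (deriv v s) ^ 2) := by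
    rw [htrace0]
    refine intervalIntegral.integral_mono_on h12 hGint hmajint ?_
    intro s hs
    set a := v s
    set b := deriv v s
    have hs1 : 0 ≤ s - 1 := by linarith [hs.1]
    have hs2 : s - 1 ≤ 1 := by linarith [hs.2]
    have hRHS : 0 ≤ ε * a ^ 2 + 1 / ε * b ^ 2 := by positivity
    have h2ab : 2 * a * b ≤ ε * a ^ 2 + 1 / ε * b ^ 2 := by
      have hq : ε * ((ε * a ^ 2 + 1 / ε * b ^ 2) - 2 * a * b) = (ε * a - b) ^ 2 := by
        field_simp; ring
      nlinarith [sq_nonneg (ε * a - b)]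
    push_cast
    nlinarith [mul_nonneg hs1 (sub_nonneg.mpr h2ab), mul_nonneg (show (0:ℝ) ≤ 2 - s by linarith [hs.2]) hRHS]
  have htrace : (v 2) ^ 2 ≤ (1 + ε) * (∫ s in Ioc (1:ℝ) 2, (v s) ^ 2)
      + 1 / ε * ∫ s in Ioc (1:ℝ) 2, (deriv v s) ^ 2 := by
    refine htrace1.trans (le_of_eq ?_)
    rw [intervalIntegral.integral_of_le h12]
    rw [MeasureTheory.integral_add (hv2int.const_mul _) (hdv2int.const_mul _),
      MeasureTheory.integral_const_mul, MeasureTheory.integral_const_mul]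
  -- absorb the derivative term on (1,2] into B
  have step5 : ∫ s in Ioc (1:ℝ) 2, (deriv v s) ^ 2 ≤ 4 * 2 ^ γ * ∫ y in Ioc (1:ℝ) 2, B y := by
    rw [← MeasureTheory.integral_const_mul]
    refine setIntegral_mono_on hdv2int (hBint12.const_mul _) measurableSet_Ioc ?_
    intro y hy
    have h1y : (1:ℝ) < y := hy.1
    have h0 : (0:ℝ) < y := by linarith
    have hl : 0 ≤ Real.log y := Real.log_nonneg h1y.le
    have hL2 : Real.log y ≤ 1 := by
      calc Real.log y ≤ Real.log 2 := Real.log_le_log h0 hy.2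
        _ ≤ 1 := by linarith [Real.log_two_lt_d9]
    have hXpos : (0:ℝ) < y ^ γ := Real.rpow_pos_of_pos h0 γ
    have hX : y ^ γ ≤ 2 ^ γ := Real.rpow_le_rpow h0.le hy.2 hγ.le
    have hLpos : (0:ℝ) < 1 + Real.log y := by linarith
    have hL4 : (1 + Real.log y) ^ 2 ≤ 4 := by nlinarith
    have hden : (0:ℝ) < y ^ γ * (1 + Real.log y) ^ 2 := by positivity
    simp only [hB]
    rw [div_mul_eq_mul_div,
      show 4 * 2 ^ γ * (deriv v y ^ 2 * y / (y ^ γ * (1 + Real.log y) ^ 2))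
          = 4 * 2 ^ γ * (deriv v y ^ 2 * y) / (y ^ γ * (1 + Real.log y) ^ 2) from by ring,
      le_div_iff₀ hden]
    have hXL : y ^ γ * (1 + Real.log y) ^ 2 ≤ 2 ^ γ * 4 :=
      mul_le_mul hX hL4 (by positivity) h2γpos.le
    nlinarith [mul_le_mul_of_nonneg_left hXL (sq_nonneg (deriv v y)),
      mul_nonneg (mul_nonneg (sq_nonneg (deriv v y)) h2γpos.le) (sub_nonneg.mpr h1y.le)]
  -- v² ≤ v² y on (1,2]
  have hv2le : ∫ s in Ioc (1:ℝ) 2, (v s) ^ 2 ≤ ∫ s in Ioc (1:ℝ) 2, (v s) ^ 2 * s := by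
    refine setIntegral_mono_on hv2int hv2yint measurableSet_Ioc ?_
    intro y hy
    nlinarith [sq_nonneg (v y), hy.1]
  -- assembly
  have hcoef : γ / 2 * (1 / ε) * (4 * 2 ^ γ) = 1 := by
    rw [hεdef]; field_simp; ring
  set IA1 := ∫ y in Ioc (1:ℝ) 2, A y
  set IA2 := ∫ y in Ioc (2:ℝ) R, A y
  set IB1 := ∫ y in Ioc (1:ℝ) 2, B y
  set IB2 := ∫ y in Ioc (2:ℝ) R, B y
  set Iv2 := ∫ s in Ioc (1:ℝ) 2, (v s) ^ 2
  set Iv2y := ∫ s in Ioc (1:ℝ) 2, (v s) ^ 2 * s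
  set Idv2 := ∫ s in Ioc (1:ℝ) 2, (deriv v s) ^ 2
  have m1 : γ ^ 2 / 4 * IA1 ≤ γ ^ 2 / 4 * Iv2y :=
    mul_le_mul_of_nonneg_left (step2.trans (le_of_eq rfl)) (by positivity)
  have m3 : γ / 2 * (v 2) ^ 2 ≤ γ / 2 * ((1 + ε) * Iv2 + 1 / ε * Idv2) :=
    mul_le_mul_of_nonneg_left htrace (by positivity)
  have m4 : γ / 2 * (1 + ε) * Iv2 ≤ γ / 2 * (1 + ε) * Iv2y :=
    mul_le_mul_of_nonneg_left hv2le (by positivity)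
  have m5 : γ / 2 * (1 / ε) * Idv2 ≤ IB1 := by
    calc γ / 2 * (1 / ε) * Idv2 ≤ γ / 2 * (1 / ε) * (4 * 2 ^ γ * IB1) :=
          mul_le_mul_of_nonneg_left step5 (by positivity)
      _ = γ / 2 * (1 / ε) * (4 * 2 ^ γ) * IB1 := by ring
      _ = IB1 := by rw [hcoef]; ring
  have e1 : γ ^ 2 / 4 * (IA1 + IA2) = γ ^ 2 / 4 * IA1 + γ ^ 2 / 4 * IA2 := by ring
  have e2 : (γ ^ 2 / 4 + γ / 2 * (1 + ε)) * Iv2y = γ ^ 2 / 4 * Iv2y + γ / 2 * (1 + ε) * Iv2y := by ring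
  have e3 : γ / 2 * ((1 + ε) * Iv2 + 1 / ε * Idv2)
      = γ / 2 * (1 + ε) * Iv2 + γ / 2 * (1 / ε) * Idv2 := by ring
  rw [hsplitA, hsplitB]
  linarith [m1, step3, m3, m4, m5, e1, e2, e3]

end
end

section
/- There exists a universal constant C > 0 such that for every R > 2 and every radially symmetric v ∈ Ḣ¹(ℝ²), represented by a C¹ function v of the radial variable y: ∫₀^R |v(y)|² y dy ≤ C·R²·( ∫₀² |v(y)|² y dy + (log R)·∫₀^R |v'(y)|² y dy ). -/
open MeasureTheory Real Set

noncomputable section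

lemma cs_key {v : ℝ → ℝ} (hv : ContDiffOn ℝ 1 v (Set.Ioi 0)) {c d : ℝ}
    (hc : 0 < c) (hcd : c ≤ d) :
    (v d - v c) ^ 2 ≤ (Real.log d - Real.log c) * ∫ t in Set.Ioc c d, (deriv v t) ^ 2 * t := by
  have hd : (0:ℝ) < d := lt_of_lt_of_le hc hcd
  have hIcc : Set.Icc c d ⊆ Set.Ioi 0 := fun x hx => lt_of_lt_of_le hc hx.1
  have hIoc : Set.Ioc c d ⊆ Set.Ioi 0 := (Set.Ioc_subset_Icc_self).trans hIcc
  have hderiv_cont : ContinuousOn (deriv v) (Set.Ioi 0) :=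
    hv.continuousOn_deriv_of_isOpen isOpen_Ioi le_rfl
  -- FTC
  have hderiv : ∀ x ∈ Set.uIcc c d, DifferentiableAt ℝ v x := by
    intro x hx
    have hx' : x ∈ Set.Ioi (0:ℝ) := hIcc (by rwa [Set.uIcc_of_le hcd] at hx)
    exact (hv.differentiableOn one_ne_zero).differentiableAt (isOpen_Ioi.mem_nhds hx')
  have hint : IntervalIntegrable (deriv v) volume c d := by
    apply ContinuousOn.intervalIntegrable
    rw [Set.uIcc_of_le hcd]
    exact hderiv_cont.mono hIcc
  have hftc : v d - v c = ∫ t in c..d, deriv v t :=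
    (intervalIntegral.integral_deriv_eq_sub hderiv hint).symm
  set μ := volume.restrict (Set.Ioc c d) with hμ
  set F : ℝ → ℝ := fun t => |deriv v t| * Real.sqrt t with hF
  set G : ℝ → ℝ := fun t => (Real.sqrt t)⁻¹ with hG
  have hFc : ContinuousOn F (Set.Icc c d) :=
    ((hderiv_cont.mono hIcc).abs).mul (Real.continuous_sqrt.continuousOn)
  have hGc : ContinuousOn G (Set.Icc c d) := by
    apply ContinuousOn.inv₀ (Real.continuous_sqrt.continuousOn)
    intro x hx
    exact (Real.sqrt_pos.mpr (hIcc hx)).ne'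
  have hFm : MemLp F 2 μ := by
    rw [memLp_two_iff_integrable_sq
      ((hFc.mono Set.Ioc_subset_Icc_self).aestronglyMeasurable measurableSet_Ioc)]
    exact ((hFc.pow 2).integrableOn_Icc).mono_set Set.Ioc_subset_Icc_self
  have hGm : MemLp G 2 μ := by
    rw [memLp_two_iff_integrable_sq
      ((hGc.mono Set.Ioc_subset_Icc_self).aestronglyMeasurable measurableSet_Ioc)]
    exact ((hGc.pow 2).integrableOn_Icc).mono_set Set.Ioc_subset_Icc_self
  have hF0 : 0 ≤ᵐ[μ] F := Filter.Eventually.of_forall fun x =>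
    mul_nonneg (abs_nonneg _) (Real.sqrt_nonneg _)
  have hG0 : 0 ≤ᵐ[μ] G := Filter.Eventually.of_forall fun x =>
    inv_nonneg.mpr (Real.sqrt_nonneg _)
  have hpq : Real.HolderConjugate 2 2 := Real.HolderConjugate.two_two
  have holder := MeasureTheory.integral_mul_le_Lp_mul_Lq_of_nonneg (μ := μ) hpq hF0 hG0
    (by simpa using hFm) (by simpa using hGm)
  -- rewrite pieces
  have hFG : ∀ x ∈ Set.Ioc c d, F x * G x = |deriv v x| := by
    intro x hx
    have hx0 : (0:ℝ) < x := hIoc hx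
    show |deriv v x| * Real.sqrt x * (Real.sqrt x)⁻¹ = _
    rw [mul_assoc, mul_inv_cancel₀ (Real.sqrt_ne_zero'.mpr hx0), mul_one]
  have hFsq : ∀ x ∈ Set.Ioc c d, F x ^ (2:ℝ) = (deriv v x) ^ 2 * x := by
    intro x hx
    have hx0 : (0:ℝ) ≤ x := le_of_lt (hIoc hx)
    rw [Real.rpow_two, hF, mul_pow, sq_abs, Real.sq_sqrt hx0]
  have hGsq : ∀ x ∈ Set.Ioc c d, G x ^ (2:ℝ) = x⁻¹ := by
    intro x hx
    have hx0 : (0:ℝ) ≤ x := le_of_lt (hIoc hx)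
    rw [Real.rpow_two, hG, inv_pow, Real.sq_sqrt hx0]
  have hIinv : ∫ x in Set.Ioc c d, x⁻¹ = Real.log d - Real.log c := by
    rw [← intervalIntegral.integral_of_le hcd, integral_inv, Real.log_div hd.ne' hc.ne']
    rw [Set.uIcc_of_le hcd]
    exact fun h => absurd h.1 (not_le.mpr hc)
  have hI : (0:ℝ) ≤ ∫ t in Set.Ioc c d, (deriv v t) ^ 2 * t :=
    setIntegral_nonneg measurableSet_Ioc fun x hx =>
      mul_nonneg (sq_nonneg _) (le_of_lt (hIoc hx))
  have hL : (0:ℝ) ≤ Real.log d - Real.log c := by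
    have := Real.log_le_log hc hcd
    linarith
  have h1 : ∫ a, F a * G a ∂μ = ∫ x in Set.Ioc c d, |deriv v x| :=
    setIntegral_congr_fun measurableSet_Ioc hFG
  have h2 : ∫ a, F a ^ (2:ℝ) ∂μ = ∫ t in Set.Ioc c d, (deriv v t) ^ 2 * t :=
    setIntegral_congr_fun measurableSet_Ioc hFsq
  have h3 : ∫ a, G a ^ (2:ℝ) ∂μ = Real.log d - Real.log c := by
    rw [setIntegral_congr_fun measurableSet_Ioc hGsq, hIinv]
  rw [h1, h2, h3] at holder
  have habs : |v d - v c| ≤ ∫ x in Set.Ioc c d, |deriv v x| := by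
    rw [hftc, intervalIntegral.integral_of_le hcd]
    simpa using norm_integral_le_integral_norm (μ := μ) (deriv v)
  have hsq : (v d - v c) ^ 2 ≤ (∫ x in Set.Ioc c d, |deriv v x|) ^ 2 := by
    rw [← sq_abs]
    exact pow_le_pow_left₀ (abs_nonneg _) habs 2
  refine hsq.trans ?_
  have hI2 : (∫ x in Set.Ioc c d, |deriv v x|) ^ 2 ≤
      ((∫ t in Set.Ioc c d, (deriv v t) ^ 2 * t) ^ (1/2:ℝ) *
        ((Real.log d - Real.log c) ^ (1/2:ℝ))) ^ 2 := by
    apply pow_le_pow_left₀ _ holder 2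
    exact setIntegral_nonneg measurableSet_Ioc fun x _ => abs_nonneg _
  refine hI2.trans_eq ?_
  have hhalf : ∀ x : ℝ, 0 ≤ x → (x ^ (1/2:ℝ)) ^ 2 = x := by
    intro x hx
    rw [← Real.rpow_two, ← Real.rpow_mul hx]
    norm_num
  rw [mul_pow, hhalf _ hI, hhalf _ hL, mul_comm]

set_option maxHeartbeats 1000000 in
/-- There is a universal `C > 0` such that for every `R > 2` and every radially symmetric
`v ∈ Ḣ¹(ℝ²)`, represented by a `C¹` function of the radial variable,
`∫₀^R v² y dy ≤ C R² (∫₀² v² y dy + log R ∫₀^R (v')² y dy)`. -/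
theorem hardy_growth_inequality :
    ∃ C : ℝ, 0 < C ∧
      ∀ R : ℝ, 2 < R → ∀ v : ℝ → ℝ,
        ContDiffOn ℝ 1 v (Set.Ioi 0) →
        IntegrableOn (fun y => (deriv v y) ^ 2 * y) (Set.Ioi 0) →
        (∫ y in Set.Ioc (0:ℝ) R, (v y) ^ 2 * y)
          ≤ C * R ^ 2 * ((∫ y in Set.Ioc (0:ℝ) 2, (v y) ^ 2 * y)
              + Real.log R * ∫ y in Set.Ioc (0:ℝ) R, (deriv v y) ^ 2 * y) := by
  refine ⟨4, by norm_num, ?_⟩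
  intro R hR v hv hDint
  have hR0 : (0:ℝ) < R := by linarith
  set D := ∫ y in Set.Ioc (0:ℝ) R, (deriv v y) ^ 2 * y with hDdef
  set A := ∫ y in Set.Ioc (0:ℝ) 2, (v y) ^ 2 * y with hAdef
  have hsubR : Set.Ioc (0:ℝ) R ⊆ Set.Ioi 0 := Set.Ioc_subset_Ioi_self
  have hDR_int : IntegrableOn (fun y => (deriv v y) ^ 2 * y) (Set.Ioc 0 R) :=
    hDint.mono_set hsubR
  have hD0 : (0:ℝ) ≤ D :=
    setIntegral_nonneg measurableSet_Ioc fun x hx =>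
      mul_nonneg (sq_nonneg _) (le_of_lt hx.1)
  have hA0 : (0:ℝ) ≤ A :=
    setIntegral_nonneg measurableSet_Ioc fun x hx =>
      mul_nonneg (sq_nonneg _) (le_of_lt hx.1)
  have hlogR : 0 < Real.log R := Real.log_pos (by linarith)
  by_cases hI : IntegrableOn (fun y => (v y) ^ 2 * y) (Set.Ioc 0 R)
  · -- main case
    have hvc : ContinuousOn v (Set.Ioi 0) := hv.continuousOn
    have h12sub : Set.Icc (1:ℝ) 2 ⊆ Set.Ioi 0 := fun x hx => lt_of_lt_of_le one_pos hx.1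
    have hc12 : ContinuousOn (fun t => v t ^ 2) (Set.Icc (1:ℝ) 2) :=
      (hvc.mono h12sub).pow 2
    obtain ⟨a, haI, hmin⟩ :=
      isCompact_Icc.exists_isMinOn (Set.nonempty_Icc.mpr (by norm_num)) hc12
    have ha1 : (1:ℝ) ≤ a := haI.1
    have ha2 : a ≤ 2 := haI.2
    have ha0 : (0:ℝ) < a := lt_of_lt_of_le one_pos ha1
    set M := ∫ t in Set.Ioc (1:ℝ) 2, v t ^ 2 with hMdef
    have hvsq_int12 : IntegrableOn (fun t => v t ^ 2) (Set.Ioc (1:ℝ) 2) :=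
      (hc12.integrableOn_Icc).mono_set Set.Ioc_subset_Icc_self
    have hMa : v a ^ 2 ≤ M := by
      have hc : ∫ t in Set.Ioc (1:ℝ) 2, v a ^ 2 ≤ M :=
        setIntegral_mono_on (integrableOn_const (by
          rw [Real.volume_Ioc]; exact ENNReal.ofReal_ne_top)) hvsq_int12
          measurableSet_Ioc (fun t ht => hmin (Set.Ioc_subset_Icc_self ht))
      rw [setIntegral_const, Real.volume_real_Ioc] at hc
      norm_num at hc
      exact hc
    have hM0 : (0:ℝ) ≤ M := le_trans (sq_nonneg _) hMa
    have h12R : Set.Ioc (1:ℝ) 2 ⊆ Set.Ioc 0 R := Set.Ioc_subset_Ioc (by norm_num) (by linarith)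
    have hMA : M ≤ A := by
      have s1 : M ≤ ∫ t in Set.Ioc (1:ℝ) 2, v t ^ 2 * t :=
        setIntegral_mono_on hvsq_int12 (hI.mono_set h12R) measurableSet_Ioc
          (fun t ht => le_mul_of_one_le_right (sq_nonneg _) ht.1.le)
      have s2 : (∫ t in Set.Ioc (1:ℝ) 2, v t ^ 2 * t) ≤ A := by
        apply setIntegral_mono_set (hI.mono_set (Set.Ioc_subset_Ioc le_rfl (by linarith)))
        · filter_upwards [ae_restrict_mem measurableSet_Ioc] with t ht
          exact mul_nonneg (sq_nonneg _) (le_of_lt ht.1)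
        · exact HasSubset.Subset.eventuallyLE (Set.Ioc_subset_Ioc (by norm_num) le_rfl)
      linarith
    -- pointwise bound
    have hpt : ∀ y ∈ Set.Ioc (0:ℝ) R,
        v y ^ 2 * y ≤ (2 * M + 2 * Real.log R * D) * y + 4 * D := by
      intro y hy
      have hy0 : 0 < y := hy.1
      have hyR : y ≤ R := hy.2
      have hbasic : v y ^ 2 ≤ 2 * v a ^ 2 + 2 * (v y - v a) ^ 2 := by
        nlinarith [sq_nonneg (v y - 2 * v a)]
      rcases le_or_gt a y with hay | hay
      · -- a ≤ y
        have hcs := cs_key hv ha0 hay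
        have hsub : Set.Ioc a y ⊆ Set.Ioc 0 R := Set.Ioc_subset_Ioc ha0.le hyR
        have hIle : (∫ t in Set.Ioc a y, (deriv v t) ^ 2 * t) ≤ D := by
          apply setIntegral_mono_set hDR_int
          · filter_upwards [ae_restrict_mem measurableSet_Ioc] with t ht
            exact mul_nonneg (sq_nonneg _) (le_of_lt ht.1)
          · exact HasSubset.Subset.eventuallyLE hsub
        have hI0 : (0:ℝ) ≤ ∫ t in Set.Ioc a y, (deriv v t) ^ 2 * t :=
          setIntegral_nonneg measurableSet_Ioc fun t ht =>
            mul_nonneg (sq_nonneg _) (le_of_lt (lt_of_lt_of_le ha0 ht.1.le))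
        have hlog_le : Real.log y - Real.log a ≤ Real.log R := by
          have h1 : Real.log y ≤ Real.log R := Real.log_le_log hy0 hyR
          have h2 : 0 ≤ Real.log a := Real.log_nonneg ha1
          linarith
        have hlog0 : 0 ≤ Real.log y - Real.log a := by
          have := Real.log_le_log ha0 hay; linarith
        have h3 : (v y - v a) ^ 2 ≤ Real.log R * D :=
          hcs.trans (mul_le_mul hlog_le hIle hI0 hlogR.le)
        have h4 : v y ^ 2 ≤ 2 * M + 2 * Real.log R * D := by nlinarith
        nlinarith [mul_le_mul_of_nonneg_right h4 hy0.le]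
      · -- y < a
        have hcs := cs_key hv hy0 hay.le
        have hsub : Set.Ioc y a ⊆ Set.Ioc 0 R :=
          Set.Ioc_subset_Ioc hy0.le (by linarith)
        have hIle : (∫ t in Set.Ioc y a, (deriv v t) ^ 2 * t) ≤ D := by
          apply setIntegral_mono_set hDR_int
          · filter_upwards [ae_restrict_mem measurableSet_Ioc] with t ht
            exact mul_nonneg (sq_nonneg _) (le_of_lt ht.1)
          · exact HasSubset.Subset.eventuallyLE hsub
        have hI0 : (0:ℝ) ≤ ∫ t in Set.Ioc y a, (deriv v t) ^ 2 * t :=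
          setIntegral_nonneg measurableSet_Ioc fun t ht =>
            mul_nonneg (sq_nonneg _) (le_of_lt (lt_of_lt_of_le hy0 ht.1.le))
        have hylog : y * (Real.log a - Real.log y) ≤ 2 := by
          have hd : (0:ℝ) < a / y := div_pos ha0 hy0
          have h1 : Real.log (a / y) ≤ a / y - 1 := Real.log_le_sub_one_of_pos hd
          rw [Real.log_div ha0.ne' hy0.ne'] at h1
          have h2 : y * (Real.log a - Real.log y) ≤ y * (a / y - 1) :=
            mul_le_mul_of_nonneg_left h1 hy0.le
          have h3 : y * (a / y - 1) = a - y := by field_simp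
          linarith
        have hlog0 : 0 ≤ Real.log a - Real.log y := by
          have := Real.log_le_log hy0 hay.le; linarith
        -- (v y - v a)^2 * y ≤ 2 * D * ... 
        have h3 : (v y - v a) ^ 2 * y ≤ 2 * D := by
          have e1 : (v y - v a) ^ 2 = (v a - v y) ^ 2 := by ring
          have e2 : (v a - v y) ^ 2 * y ≤
              ((Real.log a - Real.log y) * ∫ t in Set.Ioc y a, (deriv v t) ^ 2 * t) * y :=
            mul_le_mul_of_nonneg_right hcs hy0.le
          have e3 : ((Real.log a - Real.log y) * ∫ t in Set.Ioc y a, (deriv v t) ^ 2 * t) * y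
              = (y * (Real.log a - Real.log y)) * ∫ t in Set.Ioc y a, (deriv v t) ^ 2 * t := by
            ring
          have e4 : (y * (Real.log a - Real.log y)) * (∫ t in Set.Ioc y a, (deriv v t) ^ 2 * t)
              ≤ 2 * D :=
            mul_le_mul hylog hIle hI0 (by norm_num)
          rw [e1]
          linarith [e2, e3 ▸ e2]
        have h5 : v a ^ 2 * y ≤ M * y := mul_le_mul_of_nonneg_right hMa hy0.le
        nlinarith [mul_le_mul_of_nonneg_right hbasic hy0.le,
          mul_nonneg (mul_nonneg hlogR.le hD0) hy0.le]
    -- integrate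
    have hg_int : IntegrableOn (fun y => (2 * M + 2 * Real.log R * D) * y + 4 * D)
        (Set.Ioc (0:ℝ) R) :=
      ((continuous_const.mul continuous_id).add continuous_const).integrableOn_Ioc
    have hmono := setIntegral_mono_on hI hg_int measurableSet_Ioc hpt
    have hcalc : ∫ y in Set.Ioc (0:ℝ) R, ((2 * M + 2 * Real.log R * D) * y + 4 * D)
        = (2 * M + 2 * Real.log R * D) * (R ^ 2 / 2) + 4 * D * R := by
      have h1 : IntervalIntegrable (fun x : ℝ => (2 * M + 2 * Real.log R * D) * x)
          volume 0 R := (continuous_const.mul continuous_id').intervalIntegrable _ _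
      rw [← intervalIntegral.integral_of_le hR0.le,
        intervalIntegral.integral_add h1 intervalIntegrable_const,
        intervalIntegral.integral_const_mul, integral_id, intervalIntegral.integral_const,
        smul_eq_mul]
      ring
    rw [hcalc] at hmono
    refine hmono.trans ?_
    -- arithmetic
    have hlog2 : Real.log 2 ≤ Real.log R := Real.log_le_log (by norm_num) hR.le
    have hl2 : (0.6931471803 : ℝ) < Real.log 2 := Real.log_two_gt_d9
    have e2 : 4 * D * R ≤ 2 * D * R ^ 2 := by
      nlinarith [mul_nonneg (mul_nonneg hD0 hR0.le) (by linarith : (0:ℝ) ≤ R - 2)]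
    have hlR : (2:ℝ) ≤ 3 * Real.log R := by linarith
    have e3 : 2 * D * R ^ 2 ≤ 3 * Real.log R * D * R ^ 2 := by
      nlinarith [mul_nonneg (mul_nonneg hD0 (sq_nonneg R))
        (by linarith : (0:ℝ) ≤ 3 * Real.log R - 2)]
    have e1 : M * R ^ 2 ≤ A * R ^ 2 :=
      mul_le_mul_of_nonneg_right hMA (sq_nonneg R)
    have expand : (2 * M + 2 * Real.log R * D) * (R ^ 2 / 2) + 4 * D * R
        = M * R ^ 2 + Real.log R * D * R ^ 2 + 4 * D * R := by ring
    have eq2 : 4 * R ^ 2 * (A + Real.log R * D)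
        = 4 * (A * R ^ 2) + 4 * (Real.log R * D * R ^ 2) := by ring
    rw [expand, eq2]
    linarith [e1, e2, e3, mul_nonneg hA0 (sq_nonneg R),
      mul_nonneg (mul_nonneg hlogR.le hD0) (sq_nonneg R)]
  · -- non-integrable case: LHS = 0
    rw [MeasureTheory.integral_undef hI]
    have h0 : (0:ℝ) ≤ A + Real.log R * D := add_nonneg hA0 (mul_nonneg hlogR.le hD0)
    exact mul_nonneg (mul_nonneg (by norm_num) (sq_nonneg R)) h0
end
end
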